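/- arXiv:2203.04532 — 4 statements merged into one kernel-verified Lean document; each statement's English description precedes it below -/
import Mathlib

section
/- (Energy dissipation of GSAV-EI2.) For any stabilizing constant κ > 0, any time step τ > 0, any initial grid function u_init, and every n ≥ 0, the GSAV-EI2 iterates satisfy 𝓔_h(u^{n+1}, s^{n+1}) ≤ 𝓔_h(uⁿ, sⁿ). -/
open scoped BigOperators
noncomputable section

/-- Grid functions on the `M × M` periodic mesh, identified with vectors in `ℝ^{M²}`.
The sup norm of this Pi type is the discrete `L^∞` (maximum) norm. -/
abbrev GridFun (M : ℕ) : Type := Fin M × Fin M → ℝ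

/-- Discrete inner product `⟨v,w⟩ = h² Σ_{i,j} v_{ij} w_{ij}`. -/
def gridInner (M : ℕ) (h : ℝ) (v w : GridFun M) : ℝ :=
  h ^ 2 * ∑ p : Fin M × Fin M, v p * w p

/-- Discrete `L²` norm `‖v‖ = ⟨v,v⟩^{1/2}`. -/
def gridNorm (M : ℕ) (h : ℝ) (v : GridFun M) : ℝ :=
  Real.sqrt (gridInner M h v v)

/-- The discrete Laplacian as a linear map (periodic indexing via `Fin M` arithmetic). -/
def dLapL (M : ℕ) [NeZero M] (h : ℝ) : GridFun M →ₗ[ℝ] GridFun M where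
  toFun v := fun p =>
    (v (p.1 + 1, p.2) + v (p.1 - 1, p.2) + v (p.1, p.2 + 1) + v (p.1, p.2 - 1) - 4 * v p) / h ^ 2
  map_add' v w := by funext p; simp only [Pi.add_apply]; ring
  map_smul' c v := by funext p; simp only [Pi.smul_apply, smul_eq_mul, RingHom.id_apply]; ring

/-- The discrete Laplacian `Δ_h` as a continuous linear map on `ℝ^{M²}`. -/
def dLap (M : ℕ) [NeZero M] (h : ℝ) : GridFun M →L[ℝ] GridFun M :=
  LinearMap.toContinuousLinearMap (dLapL M h)

/-- Bulk energy `E_{1h}(v) = h² Σ F(v_{ij})`. -/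
def E1h (M : ℕ) (h : ℝ) (F : ℝ → ℝ) (v : GridFun M) : ℝ :=
  h ^ 2 * ∑ p : Fin M × Fin M, F (v p)

/-- Discrete gradient energy `(ε²/2) ‖∇_h v‖²`. -/
def gradE (M : ℕ) [NeZero M] (h ε : ℝ) (v : GridFun M) : ℝ :=
  ε ^ 2 / 2 * (h ^ 2 * ∑ p : Fin M × Fin M,
    (((v (p.1 + 1, p.2) - v p) / h) ^ 2 + ((v (p.1, p.2 + 1) - v p) / h) ^ 2))

/-- Modified energy `𝓔_h(v, r) = (ε²/2)‖∇_h v‖² + r`. -/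
def modE (M : ℕ) [NeZero M] (h ε : ℝ) (v : GridFun M) (r : ℝ) : ℝ :=
  gradE M h ε v + r

/-- Discrete energy `E_h(v) = (ε²/2)‖∇_h v‖² + E_{1h}(v)`. -/
def Eh (M : ℕ) [NeZero M] (h ε : ℝ) (F : ℝ → ℝ) (v : GridFun M) : ℝ :=
  gradE M h ε v + E1h M h F v

/-- `g(v, r) = σ(r) / σ(E_{1h}(v))`. -/
def gFun (M : ℕ) (h : ℝ) (F σ : ℝ → ℝ) (v : GridFun M) (r : ℝ) : ℝ :=
  σ r / σ (E1h M h F v)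

/-- The linear operator `L_κ = κ g₀ I − ε² Δ_h`. -/
def Lkappa (M : ℕ) [NeZero M] (h ε κ g0 : ℝ) : GridFun M →L[ℝ] GridFun M :=
  (κ * g0) • (1 : GridFun M →L[ℝ] GridFun M) - ε ^ 2 • dLap M h

/-- The nonlinear operator `N_κ(v, r) = g(v,r) f(v) + κ g₀ v` (with `f` applied entrywise). -/
def Nkappa (M : ℕ) (h κ g0 : ℝ) (f F σ : ℝ → ℝ) (v : GridFun M) (r : ℝ) : GridFun M :=
  fun p => gFun M h F σ v r * f (v p) + κ * g0 * v p

/-- One step of the GSAV-EI1 scheme. -/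
def EI1step (M : ℕ) [NeZero M] (h ε κ τ : ℝ) (f F σ : ℝ → ℝ) (us : GridFun M × ℝ) :
    GridFun M × ℝ :=
  let g0 := gFun M h F σ us.1 us.2
  let Lk := Lkappa M h ε κ g0
  let u1 := (NormedSpace.exp (-(τ • Lk))) us.1
    + (∫ θ in (0:ℝ)..τ, NormedSpace.exp (-((τ - θ) • Lk))) (Nkappa M h κ g0 f F σ us.1 us.2)
  (u1, us.2 - g0 * gridInner M h (fun p => f (us.1 p)) (u1 - us.1))

/-- The GSAV-EI1 iterates `(uⁿ, sⁿ)`. -/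
def EI1 (M : ℕ) [NeZero M] (h ε κ τ : ℝ) (f F σ : ℝ → ℝ) (uinit : GridFun M) :
    ℕ → GridFun M × ℝ
  | 0 => (uinit, E1h M h F uinit)
  | n + 1 => EI1step M h ε κ τ f F σ (EI1 M h ε κ τ f F σ uinit n)

/-- The midpoint values `(ũ^{n+1/2}, s̃^{n+1/2})` of the GSAV-EI2 scheme, as a function of
`(uⁿ, sⁿ)`; the prediction `(ũ^{n+1}, s̃^{n+1})` is a GSAV-EI1 step. -/
def EI2half (M : ℕ) [NeZero M] (h ε κ τ : ℝ) (f F σ : ℝ → ℝ) (us : GridFun M × ℝ) :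
    GridFun M × ℝ :=
  let t := EI1step M h ε κ τ f F σ us
  ((1 / 2 : ℝ) • (us.1 + t.1), (us.2 + t.2) / 2)

/-- One step of the GSAV-EI2 scheme. -/
def EI2step (M : ℕ) [NeZero M] (h ε κ τ : ℝ) (f F σ : ℝ → ℝ) (us : GridFun M × ℝ) :
    GridFun M × ℝ :=
  let t := EI1step M h ε κ τ f F σ us
  let m := EI2half M h ε κ τ f F σ us
  let gh := gFun M h F σ m.1 m.2
  let Lk := Lkappa M h ε κ gh
  let u1 := (NormedSpace.exp (-(τ • Lk))) us.1
    + (∫ θ in (0:ℝ)..τ, NormedSpace.exp (-((τ - θ) • Lk))) (Nkappa M h κ gh f F σ m.1 m.2)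
  (u1, us.2 - gh * gridInner M h (fun p => f (m.1 p)) (u1 - us.1)
        + κ / 2 * gh * gridInner M h (u1 - t.1) (u1 - us.1))

/-- The GSAV-EI2 iterates `(uⁿ, sⁿ)`. -/
def EI2 (M : ℕ) [NeZero M] (h ε κ τ : ℝ) (f F σ : ℝ → ℝ) (uinit : GridFun M) :
    ℕ → GridFun M × ℝ
  | 0 => (uinit, E1h M h F uinit)
  | n + 1 => EI2step M h ε κ τ f F σ (EI2 M h ε κ τ f F σ uinit n)

/-- One step of the stabilized generalized-SAV scheme (GSAV-EI1 with `e^{−τL}` replaced by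
`(I + τL)^{−1}`). -/
def SAV1step (M : ℕ) [NeZero M] (h ε κ τ : ℝ) (f F σ : ℝ → ℝ) (us : GridFun M × ℝ) :
    GridFun M × ℝ :=
  let g0 := gFun M h F σ us.1 us.2
  let Lk := Lkappa M h ε κ g0
  let u1 := (Ring.inverse ((1 : GridFun M →L[ℝ] GridFun M) + τ • Lk))
      (us.1 + τ • Nkappa M h κ g0 f F σ us.1 us.2)
  (u1, us.2 - g0 * gridInner M h (fun p => f (us.1 p)) (u1 - us.1))

/-- The stabilized generalized-SAV iterates `(uⁿ, sⁿ)`. -/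
def SAV1 (M : ℕ) [NeZero M] (h ε κ τ : ℝ) (f F σ : ℝ → ℝ) (uinit : GridFun M) :
    ℕ → GridFun M × ℝ
  | 0 => (uinit, E1h M h F uinit)
  | n + 1 => SAV1step M h ε κ τ f F σ (SAV1 M h ε κ τ f F σ uinit n)

namespace GSAV

open MeasureTheory

variable {M : ℕ} [NeZero M]

abbrev Op (M : ℕ) : Type := GridFun M →L[ℝ] GridFun M

/-- plain dot product on grid functions -/
def dotP (v w : GridFun M) : ℝ := ∑ p : Fin M × Fin M, v p * w p

lemma dotP_comm (v w : GridFun M) : dotP v w = dotP w v :=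
  Finset.sum_congr rfl fun p _ => mul_comm _ _

lemma dotP_self_nonneg (v : GridFun M) : 0 ≤ dotP v v :=
  Finset.sum_nonneg fun p _ => mul_self_nonneg _

lemma dotP_add_left (u v w : GridFun M) : dotP (u + v) w = dotP u w + dotP v w := by
  simp [dotP, add_mul, Finset.sum_add_distrib]

lemma dotP_smul_left (c : ℝ) (u w : GridFun M) : dotP (c • u) w = c * dotP u w := by
  simp [dotP, Finset.mul_sum, mul_assoc]

lemma dotP_neg_left (u w : GridFun M) : dotP (-u) w = -dotP u w := by
  simp [dotP, Finset.sum_neg_distrib]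

lemma dotP_neg_right (u w : GridFun M) : dotP u (-w) = -dotP u w := by
  simp [dotP, Finset.sum_neg_distrib]

lemma dotP_sub_left (u v w : GridFun M) : dotP (u - v) w = dotP u w - dotP v w := by
  simp [dotP, sub_mul, Finset.sum_sub_distrib]

/-- evaluation-then-dot, as a continuous linear functional on operators -/
def evalDotL (v w : GridFun M) : Op M →ₗ[ℝ] ℝ where
  toFun S := dotP (S v) w
  map_add' S T := by simp [dotP, ContinuousLinearMap.add_apply, add_mul, Finset.sum_add_distrib]
  map_smul' c S := by
    simp [dotP, ContinuousLinearMap.smul_apply, Finset.mul_sum, mul_assoc]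

def evalDot (v w : GridFun M) : Op M →L[ℝ] ℝ :=
  LinearMap.toContinuousLinearMap (evalDotL v w)

lemma evalDot_apply (v w : GridFun M) (S : Op M) : evalDot v w S = dotP (S v) w := rfl

/-- symmetry of an operator w.r.t. the dot product -/
def SymOp (T : Op M) : Prop := ∀ v w : GridFun M, dotP (T v) w = dotP v (T w)

lemma symOp_one : SymOp (1 : Op M) := fun v w => rfl

lemma dotP_smul_right (c : ℝ) (u w : GridFun M) : dotP u (c • w) = c * dotP u w := by
  rw [dotP_comm, dotP_smul_left, dotP_comm]

lemma dotP_sub_right (u v w : GridFun M) : dotP u (v - w) = dotP u v - dotP u w := by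
  rw [dotP_comm, dotP_sub_left, dotP_comm v, dotP_comm w]

lemma SymOp.smul {T : Op M} (hT : SymOp T) (c : ℝ) : SymOp (c • T) := by
  intro v w
  have h1 : (c • T) v = c • (T v) := rfl
  have h2 : (c • T) w = c • (T w) := rfl
  rw [h1, h2, dotP_smul_left, dotP_smul_right, hT]

lemma SymOp.sub {T S : Op M} (hT : SymOp T) (hS : SymOp S) : SymOp (T - S) := by
  intro v w
  have h1 : (T - S) v = T v - S v := rfl
  have h2 : (T - S) w = T w - S w := rfl
  rw [h1, h2, dotP_sub_left, dotP_sub_right, hT, hS]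

lemma SymOp.pow {T : Op M} (hT : SymOp T) : ∀ n : ℕ, SymOp (T ^ n)
  | 0 => by rw [pow_zero]; exact symOp_one
  | n + 1 => by
    intro v w
    have hc : T ^ n * T = T * T ^ n := by rw [← pow_succ, pow_succ']
    rw [pow_succ, ContinuousLinearMap.mul_apply, SymOp.pow hT n (T v) w, hT,
      ← ContinuousLinearMap.mul_apply T, ← hc, ContinuousLinearMap.mul_apply]

lemma SymOp.exp {T : Op M} (hT : SymOp T) : SymOp (NormedSpace.exp T) := by
  intro v w
  have hs : Summable (fun n : ℕ => ((Nat.factorial n : ℝ))⁻¹ • T ^ n) :=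
    NormedSpace.expSeries_summable' (𝕂 := ℝ) T
  have he : NormedSpace.exp T = ∑' n : ℕ, ((Nat.factorial n : ℝ))⁻¹ • T ^ n := by
    rw [NormedSpace.exp_eq_tsum ℝ]
  have h1 : dotP (NormedSpace.exp T v) w
      = ∑' n : ℕ, ((Nat.factorial n : ℝ))⁻¹ * dotP ((T ^ n) v) w := by
    rw [show dotP (NormedSpace.exp T v) w = evalDot v w (NormedSpace.exp T) from rfl, he,
      ContinuousLinearMap.map_tsum _ hs]
    exact tsum_congr fun n => by
      rw [_root_.map_smul]; simp [evalDot_apply, smul_eq_mul]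
  have h2 : dotP v (NormedSpace.exp T w)
      = ∑' n : ℕ, ((Nat.factorial n : ℝ))⁻¹ * dotP ((T ^ n) w) v := by
    rw [dotP_comm,
      show dotP (NormedSpace.exp T w) v = evalDot w v (NormedSpace.exp T) from rfl, he,
      ContinuousLinearMap.map_tsum _ hs]
    exact tsum_congr fun n => by
      rw [_root_.map_smul]; simp [evalDot_apply, smul_eq_mul]
  rw [h1, h2]
  exact tsum_congr fun n => by rw [hT.pow n, dotP_comm]

end GSAV

namespace GSAV

variable {M : ℕ} [NeZero M]

lemma sum_shift_fst (c : Fin M) (F : GridFun M) :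
    ∑ p : Fin M × Fin M, F (p.1 + c, p.2) = ∑ p : Fin M × Fin M, F p :=
  Fintype.sum_equiv ((Equiv.addRight c).prodCongr (Equiv.refl (Fin M)))
    (fun p => F (p.1 + c, p.2)) F (fun p => rfl)

lemma sum_shift_snd (c : Fin M) (F : GridFun M) :
    ∑ p : Fin M × Fin M, F (p.1, p.2 + c) = ∑ p : Fin M × Fin M, F p :=
  Fintype.sum_equiv ((Equiv.refl (Fin M)).prodCongr (Equiv.addRight c))
    (fun p => F (p.1, p.2 + c)) F (fun p => rfl)

lemma shiftAB1 (a b : GridFun M) :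
    ∑ p : Fin M × Fin M, a (p.1 + 1, p.2) * b (p.1 + 1, p.2)
      = ∑ p : Fin M × Fin M, a p * b p := by
  have := sum_shift_fst (1 : Fin M) (fun q => a q * b q)
  simpa using this

lemma shiftAB2 (a b : GridFun M) :
    ∑ p : Fin M × Fin M, a (p.1, p.2 + 1) * b (p.1, p.2 + 1)
      = ∑ p : Fin M × Fin M, a p * b p := by
  have := sum_shift_snd (1 : Fin M) (fun q => a q * b q)
  simpa using this

lemma shiftA1 (a b : GridFun M) :
    ∑ p : Fin M × Fin M, a (p.1 + 1, p.2) * b p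
      = ∑ p : Fin M × Fin M, a p * b (p.1 - 1, p.2) := by
  have := sum_shift_fst (1 : Fin M) (fun q => a q * b (q.1 - 1, q.2))
  simpa [add_sub_cancel_right] using this

lemma shiftA2 (a b : GridFun M) :
    ∑ p : Fin M × Fin M, a (p.1, p.2 + 1) * b p
      = ∑ p : Fin M × Fin M, a p * b (p.1, p.2 - 1) := by
  have := sum_shift_snd (1 : Fin M) (fun q => a q * b (q.1, q.2 - 1))
  simpa [add_sub_cancel_right] using this

/-- summation by parts on the periodic grid -/
lemma byparts (a b : GridFun M) :
    ∑ p : Fin M × Fin M,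
        ((a (p.1 + 1, p.2) - a p) * (b (p.1 + 1, p.2) - b p)
          + (a (p.1, p.2 + 1) - a p) * (b (p.1, p.2 + 1) - b p))
      = - ∑ p : Fin M × Fin M,
          a p * (b (p.1 + 1, p.2) + b (p.1 - 1, p.2) + b (p.1, p.2 + 1) + b (p.1, p.2 - 1)
            - 4 * b p) := by
  have expand : ∀ p : Fin M × Fin M,
      (a (p.1 + 1, p.2) - a p) * (b (p.1 + 1, p.2) - b p)
        + (a (p.1, p.2 + 1) - a p) * (b (p.1, p.2 + 1) - b p)
      = (a (p.1 + 1, p.2) * b (p.1 + 1, p.2) + a (p.1, p.2 + 1) * b (p.1, p.2 + 1)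
          + a p * b p + a p * b p)
        - (a (p.1 + 1, p.2) * b p + a (p.1, p.2 + 1) * b p)
        - (a p * b (p.1 + 1, p.2) + a p * b (p.1, p.2 + 1)) := by
    intro p; ring
  rw [Finset.sum_congr rfl fun p _ => expand p]
  simp only [Finset.sum_sub_distrib, Finset.sum_add_distrib]
  rw [shiftAB1, shiftAB2, shiftA1, shiftA2]
  have expand2 : ∀ p : Fin M × Fin M,
      a p * (b (p.1 + 1, p.2) + b (p.1 - 1, p.2) + b (p.1, p.2 + 1) + b (p.1, p.2 - 1)
          - 4 * b p)
      = (a p * b (p.1 + 1, p.2) + a p * b (p.1, p.2 + 1))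
        + (a p * b (p.1 - 1, p.2) + a p * b (p.1, p.2 - 1))
        - (a p * b p + a p * b p + a p * b p + a p * b p) := by
    intro p; ring
  rw [Finset.sum_congr rfl fun p _ => expand2 p]
  simp only [Finset.sum_sub_distrib, Finset.sum_add_distrib]
  ring

/-- symmetry of the neighbour sum -/
lemma nsum_comm (a b : GridFun M) :
    ∑ p : Fin M × Fin M,
        a p * (b (p.1 + 1, p.2) + b (p.1 - 1, p.2) + b (p.1, p.2 + 1) + b (p.1, p.2 - 1)
          - 4 * b p)
      = ∑ p : Fin M × Fin M,
        b p * (a (p.1 + 1, p.2) + a (p.1 - 1, p.2) + a (p.1, p.2 + 1) + a (p.1, p.2 - 1)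
          - 4 * a p) := by
  have h1 := byparts a b
  have h2 := byparts b a
  have h3 : ∑ p : Fin M × Fin M,
      ((a (p.1 + 1, p.2) - a p) * (b (p.1 + 1, p.2) - b p)
        + (a (p.1, p.2 + 1) - a p) * (b (p.1, p.2 + 1) - b p))
      = ∑ p : Fin M × Fin M,
      ((b (p.1 + 1, p.2) - b p) * (a (p.1 + 1, p.2) - a p)
        + (b (p.1, p.2 + 1) - b p) * (a (p.1, p.2 + 1) - a p)) :=
    Finset.sum_congr rfl fun p _ => by ring
  linarith [h1, h2, h3]

lemma dLap_apply (h : ℝ) (v : GridFun M) (p : Fin M × Fin M) :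
    dLap M h v p
      = (v (p.1 + 1, p.2) + v (p.1 - 1, p.2) + v (p.1, p.2 + 1) + v (p.1, p.2 - 1) - 4 * v p)
          / h ^ 2 := rfl

lemma symOp_dLap (h : ℝ) : SymOp (dLap M h) := by
  intro v w
  unfold dotP
  have l1 : ∀ p : Fin M × Fin M, dLap M h v p * w p
      = (v (p.1 + 1, p.2) + v (p.1 - 1, p.2) + v (p.1, p.2 + 1) + v (p.1, p.2 - 1) - 4 * v p)
          * w p / h ^ 2 := by
    intro p; rw [dLap_apply]; ring
  have l2 : ∀ p : Fin M × Fin M, v p * dLap M h w p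
      = (w (p.1 + 1, p.2) + w (p.1 - 1, p.2) + w (p.1, p.2 + 1) + w (p.1, p.2 - 1) - 4 * w p)
          * v p / h ^ 2 := by
    intro p; rw [dLap_apply]; ring
  rw [Finset.sum_congr rfl fun p _ => l1 p, Finset.sum_congr rfl fun p _ => l2 p,
    ← Finset.sum_div, ← Finset.sum_div]
  congr 1
  have := nsum_comm w v
  calc ∑ p : Fin M × Fin M,
        (v (p.1 + 1, p.2) + v (p.1 - 1, p.2) + v (p.1, p.2 + 1) + v (p.1, p.2 - 1) - 4 * v p)
          * w p
      = ∑ p : Fin M × Fin M,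
        w p * (v (p.1 + 1, p.2) + v (p.1 - 1, p.2) + v (p.1, p.2 + 1) + v (p.1, p.2 - 1)
          - 4 * v p) := Finset.sum_congr rfl fun p _ => by ring
    _ = ∑ p : Fin M × Fin M,
        v p * (w (p.1 + 1, p.2) + w (p.1 - 1, p.2) + w (p.1, p.2 + 1) + w (p.1, p.2 - 1)
          - 4 * w p) := nsum_comm w v
    _ = ∑ p : Fin M × Fin M,
        (w (p.1 + 1, p.2) + w (p.1 - 1, p.2) + w (p.1, p.2 + 1) + w (p.1, p.2 - 1) - 4 * w p)
          * v p := Finset.sum_congr rfl fun p _ => by ring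

lemma gradE_eq {h : ℝ} (hh : h ≠ 0) (ε : ℝ) (v : GridFun M) :
    gradE M h ε v
      = ε ^ 2 / 2 * ∑ p : Fin M × Fin M,
          ((v (p.1 + 1, p.2) - v p) ^ 2 + (v (p.1, p.2 + 1) - v p) ^ 2) := by
  unfold gradE
  congr 1
  rw [Finset.mul_sum]
  refine Finset.sum_congr rfl fun p _ => ?_
  field_simp

/-- difference of gradient energies via summation by parts -/
lemma gradE_sub {h : ℝ} (hh : h ≠ 0) (ε : ℝ) (u0 u1 : GridFun M) :
    gradE M h ε u1 - gradE M h ε u0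
      = -(ε ^ 2 / 2) * ∑ p : Fin M × Fin M,
          (u0 + u1) p *
            ((u1 - u0) (p.1 + 1, p.2) + (u1 - u0) (p.1 - 1, p.2) + (u1 - u0) (p.1, p.2 + 1)
              + (u1 - u0) (p.1, p.2 - 1) - 4 * (u1 - u0) p) := by
  rw [gradE_eq hh, gradE_eq hh, ← mul_sub, ← Finset.sum_sub_distrib]
  have step : ∀ p : Fin M × Fin M,
      (u1 (p.1 + 1, p.2) - u1 p) ^ 2 + (u1 (p.1, p.2 + 1) - u1 p) ^ 2
        - ((u0 (p.1 + 1, p.2) - u0 p) ^ 2 + (u0 (p.1, p.2 + 1) - u0 p) ^ 2)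
      = ((u0 + u1) (p.1 + 1, p.2) - (u0 + u1) p) * ((u1 - u0) (p.1 + 1, p.2) - (u1 - u0) p)
        + ((u0 + u1) (p.1, p.2 + 1) - (u0 + u1) p) * ((u1 - u0) (p.1, p.2 + 1) - (u1 - u0) p) := by
    intro p
    simp only [Pi.add_apply, Pi.sub_apply]
    ring
  rw [Finset.sum_congr rfl fun p _ => step p, byparts (u0 + u1) (u1 - u0)]
  ring

end GSAV

namespace GSAV

open MeasureTheory intervalIntegral

variable {M : ℕ} [NeZero M]

instance instNormedAlgebraRatOp : NormedAlgebra ℚ (Op M) := .restrictScalars ℚ ℝ (Op M)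

lemma contEop (A : Op M) : Continuous fun θ : ℝ => NormedSpace.exp (-(θ • A)) :=
  NormedSpace.exp_continuous.comp ((continuous_id.smul continuous_const).neg)

lemma intervalIntegrable_Eop (A : Op M) (a b : ℝ) :
    IntervalIntegrable (fun θ : ℝ => NormedSpace.exp (-(θ • A))) volume a b :=
  (contEop A).intervalIntegrable a b

lemma J_shift (A : Op M) (τ : ℝ) :
    (∫ θ in (0:ℝ)..τ, NormedSpace.exp (-((τ - θ) • A)))
      = ∫ θ in (0:ℝ)..τ, NormedSpace.exp (-(θ • A)) := by
  have := intervalIntegral.integral_comp_sub_left (a := (0:ℝ)) (b := τ)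
    (fun θ : ℝ => NormedSpace.exp (-(θ • A))) τ
  simpa using this

lemma mul_intervalIntegral (g : ℝ → Op M) {a b : ℝ}
    (hg : IntervalIntegrable g volume a b) (B : Op M) :
    B * (∫ θ in a..b, g θ) = ∫ θ in a..b, B * g θ :=
  ((ContinuousLinearMap.mul ℝ (Op M) B).intervalIntegral_comp_comm hg).symm

lemma intervalIntegral_mul (g : ℝ → Op M) {a b : ℝ}
    (hg : IntervalIntegrable g volume a b) (B : Op M) :
    (∫ θ in a..b, g θ) * B = ∫ θ in a..b, g θ * B :=
  (((ContinuousLinearMap.mul ℝ (Op M)).flip B).intervalIntegral_comp_comm hg).symm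

lemma commute_A_Eop (A : Op M) (θ : ℝ) : Commute A (NormedSpace.exp (-(θ • A))) :=
  Commute.exp_right (((Commute.refl A).smul_right θ).neg_right)

lemma commute_Eop_Eop (A : Op M) (θ₁ θ₂ : ℝ) :
    Commute (NormedSpace.exp (-(θ₁ • A))) (NormedSpace.exp (-(θ₂ • A))) :=
  Commute.exp ((((Commute.refl A).smul_left θ₁).smul_right θ₂).neg_left.neg_right)

lemma dotP_intervalIntegral (g : ℝ → Op M) {a b : ℝ}
    (hg : IntervalIntegrable g volume a b) (v w : GridFun M) :
    dotP ((∫ θ in a..b, g θ) v) w = ∫ θ in a..b, dotP (g θ v) w := by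
  rw [show dotP ((∫ θ in a..b, g θ) v) w = evalDot v w (∫ θ in a..b, g θ) from rfl,
    ← ContinuousLinearMap.intervalIntegral_comp_comm _ hg]
  rfl

/-- FTC identity `A * ∫₀^τ e^{-θA} dθ = 1 - e^{-τA}`. -/
lemma A_mul_J (A : Op M) (τ : ℝ) :
    A * (∫ θ in (0:ℝ)..τ, NormedSpace.exp (-(θ • A)))
      = 1 - NormedSpace.exp (-(τ • A)) := by
  have hderiv : ∀ θ ∈ Set.uIcc (0:ℝ) τ,
      HasDerivAt (fun t : ℝ => NormedSpace.exp (-(t • A)))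
        (-(A * NormedSpace.exp (-(θ • A)))) θ := by
    intro θ _
    have h0 : (fun t : ℝ => NormedSpace.exp (-(t • A)))
        = fun t : ℝ => NormedSpace.exp (t • (-A)) := by
      funext t; rw [smul_neg]
    have := hasDerivAt_exp_smul_const' (𝕂 := ℝ) (-A) θ
    rw [← h0] at this
    have h1 : -A * NormedSpace.exp (θ • -A) = -(A * NormedSpace.exp (-(θ • A))) := by
      rw [smul_neg]; exact neg_mul A _
    rwa [h1] at this
  have hint : IntervalIntegrable
      (fun θ : ℝ => -(A * NormedSpace.exp (-(θ • A)))) volume 0 τ :=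
    ((continuous_const.mul (contEop A)).neg).intervalIntegrable 0 τ
  have hFTC := intervalIntegral.integral_eq_sub_of_hasDerivAt hderiv hint
  rw [intervalIntegral.integral_neg,
    ← mul_intervalIntegral _ (intervalIntegrable_Eop A 0 τ) A] at hFTC
  have h00 : NormedSpace.exp (-((0:ℝ) • A)) = 1 := by
    simp [NormedSpace.exp_zero]
  rw [h00] at hFTC
  simpa [neg_sub] using congrArg Neg.neg hFTC

/-- exp commutes through the integral `J`. -/
lemma commute_B_J (A B : Op M) (τ : ℝ)
    (hc : ∀ θ : ℝ, Commute B (NormedSpace.exp (-(θ • A)))) :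
    B * (∫ θ in (0:ℝ)..τ, NormedSpace.exp (-(θ • A)))
      = (∫ θ in (0:ℝ)..τ, NormedSpace.exp (-(θ • A))) * B := by
  rw [mul_intervalIntegral _ (intervalIntegrable_Eop A 0 τ) B,
    intervalIntegral_mul _ (intervalIntegrable_Eop A 0 τ) B]
  exact intervalIntegral.integral_congr fun θ _ => (hc θ).eq

/-- nonnegativity of `⟨e^S v, v⟩` for symmetric `S`. -/
lemma dotP_exp_nonneg {S : Op M} (hS : SymOp S) (v : GridFun M) :
    0 ≤ dotP (NormedSpace.exp S v) v := by
  have hhalf : S = (1/2 : ℝ) • S + (1/2 : ℝ) • S := by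
    rw [← add_smul]; norm_num
  have hexp : NormedSpace.exp S
      = NormedSpace.exp ((1/2 : ℝ) • S) * NormedSpace.exp ((1/2 : ℝ) • S) := by
    conv_lhs => rw [hhalf]
    rw [NormedSpace.exp_add_of_commute (Commute.refl _)]
  have hsymB : SymOp (NormedSpace.exp ((1/2 : ℝ) • S)) := (hS.smul _).exp
  rw [hexp, ContinuousLinearMap.mul_apply, hsymB]
  exact dotP_self_nonneg _

lemma symOp_neg {T : Op M} (hT : SymOp T) : SymOp (-T) := by
  intro v w
  have h1 : (-T) v = -(T v) := rfl
  have h2 : (-T) w = -(T w) := rfl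
  rw [h1, h2, dotP_neg_left, dotP_neg_right, hT]

/-- nonnegativity of `⟨J v, v⟩`. -/
lemma dotP_J_nonneg {A : Op M} (hA : SymOp A) {τ : ℝ} (hτ : 0 ≤ τ) (v : GridFun M) :
    0 ≤ dotP ((∫ θ in (0:ℝ)..τ, NormedSpace.exp (-(θ • A))) v) v := by
  rw [dotP_intervalIntegral _ (intervalIntegrable_Eop A 0 τ)]
  refine intervalIntegral.integral_nonneg hτ fun θ _ => ?_
  exact dotP_exp_nonneg (symOp_neg (hA.smul θ)) v

lemma symOp_Eop {A : Op M} (hA : SymOp A) (θ : ℝ) :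
    SymOp (NormedSpace.exp (-(θ • A))) := (symOp_neg (hA.smul θ)).exp

lemma symOp_J {A : Op M} (hA : SymOp A) (τ : ℝ) :
    SymOp (∫ θ in (0:ℝ)..τ, NormedSpace.exp (-(θ • A))) := by
  intro v w
  rw [dotP_intervalIntegral _ (intervalIntegrable_Eop A 0 τ), dotP_comm,
    dotP_intervalIntegral _ (intervalIntegrable_Eop A 0 τ)]
  exact intervalIntegral.integral_congr fun θ _ => by
    rw [symOp_Eop hA θ, dotP_comm]

end GSAV

namespace GSAV

open MeasureTheory

variable {M : ℕ} [NeZero M]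

/-- The core operator-level dissipation inequality. -/
lemma core (A : Op M) (hA : SymOp A) {τ : ℝ} (hτ : 0 ≤ τ) (u0 NN u1 : GridFun M)
    (hu1 : u1 = NormedSpace.exp (-(τ • A)) u0
      + (∫ θ in (0:ℝ)..τ, NormedSpace.exp (-((τ - θ) • A))) NN) :
    dotP (A ((1/2 : ℝ) • (u0 + u1)) - NN) (u1 - u0) ≤ 0 := by
  set J : Op M := ∫ θ in (0:ℝ)..τ, NormedSpace.exp (-(θ • A)) with hJ
  set E : Op M := NormedSpace.exp (-(τ • A)) with hE
  have hAJ : A * J = 1 - E := A_mul_J A τ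
  have hJA : A * J = J * A := commute_B_J A A τ fun θ => commute_A_Eop A θ
  set v : GridFun M := A u0 - NN with hv
  -- the increment
  have hδ : u1 - u0 = -(J v) := by
    rw [hu1, J_shift, ← hJ]
    have h1 : E u0 + J NN - u0 = (E - 1) u0 + J NN := by
      rw [ContinuousLinearMap.sub_apply, ContinuousLinearMap.one_apply]; abel
    rw [h1]
    have h2 : E - 1 = -(J * A) := by rw [← hJA, hAJ]; abel
    rw [h2]
    have h3 : (-(J * A)) u0 = -(J (A u0)) := rfl
    rw [h3, hv, map_sub]
    abel
  -- split the target
  have hsplit : dotP (A ((1/2 : ℝ) • (u0 + u1)) - NN) (u1 - u0)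
      = (1/2 : ℝ) * dotP (A (u1 - u0)) (u1 - u0) + dotP v (u1 - u0) := by
    have e1 : (1/2 : ℝ) • (u0 + u1) = u0 + (1/2 : ℝ) • (u1 - u0) := by
      funext p
      simp only [Pi.smul_apply, Pi.add_apply, Pi.sub_apply, smul_eq_mul]
      ring
    rw [e1, map_add, _root_.map_smul]
    have e2 : A u0 + (1/2 : ℝ) • A (u1 - u0) - NN
        = ((1/2 : ℝ) • A (u1 - u0)) + v := by
      rw [hv]; abel
    rw [e2, dotP_add_left, dotP_smul_left]
  rw [hsplit, hδ]
  have hJv1 : A (-(J v)) = -(A (J v)) := by rw [map_neg]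
  rw [hJv1, dotP_neg_left, dotP_neg_right, dotP_neg_right, neg_neg]
  -- key identity for ⟨A J v, J v⟩
  have hkey : dotP (A (J v)) (J v) = dotP (J v) v - dotP (E (J v)) v := by
    have h1 : dotP (A (J v)) (J v) = dotP (J (A (J v))) v := by
      rw [symOp_J hA τ (A (J v)) v]
    have h2 : J (A (J v)) = J v - E (J v) := by
      have : J (A (J v)) = (J * A) (J v) := rfl
      rw [this, ← hJA, hAJ]
      rfl
    rw [h1, h2, dotP_sub_left]
  have hpos1 : 0 ≤ dotP (J v) v := dotP_J_nonneg hA hτ v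
  have hpos2 : 0 ≤ dotP (E (J v)) v := by
    set B : Op M := NormedSpace.exp (-((τ/2) • A)) with hB
    have hEB : E = B * B := by
      rw [hE, hB, ← NormedSpace.exp_add_of_commute (Commute.refl _)]
      congr 1
      rw [← neg_add, ← add_smul]
      norm_num
    have hsymB : SymOp B := symOp_Eop hA (τ/2)
    have hBJ : B * J = J * B := commute_B_J A B τ fun θ => commute_Eop_Eop A (τ/2) θ
    have e3 : E (J v) = B (B (J v)) := by rw [hEB]; rfl
    have e4 : B (J v) = J (B v) := by
      have : B (J v) = (B * J) v := rfl
      rw [this, hBJ]; rfl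
    rw [e3, e4, hsymB]
    exact dotP_J_nonneg hA hτ (B v)
  rw [hkey]
  have hcomm := dotP_comm v (J v)
  linarith

end GSAV

/-- Energy dissipation of GSAV-EI2: for any `κ > 0`, `τ > 0`, initial grid function, and `n ≥ 0`,
`𝓔_h(u^{n+1}, s^{n+1}) ≤ 𝓔_h(uⁿ, sⁿ)`. -/
theorem stmt_11 (M : ℕ) [NeZero M] (L h ε : ℝ) (hL : 0 < L) (hh : h = L / M) (hε : 0 < ε)
    (f F σ : ℝ → ℝ) (hF : ∀ x, HasDerivAt F (-f x) x)
    (hσ : ContDiff ℝ 1 σ) (hσpos : ∀ x, 0 < σ x) (hσmono : ∀ x, 0 ≤ deriv σ x)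
    (κ : ℝ) (hκ : 0 < κ) (hf : ContDiff ℝ 1 f)
    (τ : ℝ) (hτ : 0 < τ) (uinit : GridFun M) :
    ∀ n : ℕ,
      modE M h ε (EI2 M h ε κ τ f F σ uinit (n + 1)).1 (EI2 M h ε κ τ f F σ uinit (n + 1)).2
        ≤ modE M h ε (EI2 M h ε κ τ f F σ uinit n).1 (EI2 M h ε κ τ f F σ uinit n).2 := by
  intro n
  have hM : (0:ℝ) < (M:ℝ) := by exact_mod_cast Nat.pos_of_ne_zero (NeZero.ne M)
  have hh0 : 0 < h := by rw [hh]; exact div_pos hL hM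
  have hh' : h ≠ 0 := ne_of_gt hh0
  set us := EI2 M h ε κ τ f F σ uinit n with hus
  show modE M h ε (EI2step M h ε κ τ f F σ us).1 (EI2step M h ε κ τ f F σ us).2
      ≤ modE M h ε us.1 us.2
  set t1 := (EI1step M h ε κ τ f F σ us).1 with ht1
  set m := EI2half M h ε κ τ f F σ us with hm
  set gh := gFun M h F σ m.1 m.2 with hgh
  set A := Lkappa M h ε κ gh with hA
  set NN := Nkappa M h κ gh f F σ m.1 m.2 with hNN
  set u1 := (NormedSpace.exp (-(τ • A))) us.1
    + (∫ θ in (0:ℝ)..τ, NormedSpace.exp (-((τ - θ) • A))) NN with hu1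
  have hfst : (EI2step M h ε κ τ f F σ us).1 = u1 := rfl
  have hsnd : (EI2step M h ε κ τ f F σ us).2
      = us.2 - gh * gridInner M h (fun p => f (m.1 p)) (u1 - us.1)
        + κ / 2 * gh * gridInner M h (u1 - t1) (u1 - us.1) := rfl
  rw [hfst, hsnd]
  have hsymA : GSAV.SymOp A := by
    rw [hA]
    exact GSAV.SymOp.sub (GSAV.symOp_one.smul (κ * gh)) ((GSAV.symOp_dLap h).smul (ε ^ 2))
  have hcore := GSAV.core A hsymA (le_of_lt hτ) us.1 NN u1 hu1
  have hm1 : m.1 = (1/2 : ℝ) • (us.1 + t1) := rfl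
  have hNp : ∀ p : Fin M × Fin M, NN p = gh * f (m.1 p) + κ * gh * m.1 p := fun p => rfl
  have happA : ∀ (x : GridFun M) (p : Fin M × Fin M),
      A x p = κ * gh * x p
        - ε ^ 2 * ((x (p.1 + 1, p.2) + x (p.1 - 1, p.2) + x (p.1, p.2 + 1) + x (p.1, p.2 - 1)
            - 4 * x p) / h ^ 2) := by
    intro x p
    rw [hA]
    show (((κ * gh) • (1 : GridFun M →L[ℝ] GridFun M) - ε ^ 2 • dLap M h) x) p = _
    rw [ContinuousLinearMap.sub_apply, ContinuousLinearMap.smul_apply,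
      ContinuousLinearMap.smul_apply, ContinuousLinearMap.one_apply]
    simp only [Pi.sub_apply, Pi.smul_apply, smul_eq_mul]
    rw [GSAV.dLap_apply]
  have key : gradE M h ε u1 - gradE M h ε us.1
      + (-(gh * gridInner M h (fun p => f (m.1 p)) (u1 - us.1))
        + κ / 2 * gh * gridInner M h (u1 - t1) (u1 - us.1))
      = h ^ 2 * GSAV.dotP (A ((1/2 : ℝ) • (us.1 + u1)) - NN) (u1 - us.1) := by
    have swap := GSAV.nsum_comm (u1 - us.1) ((1/2 : ℝ) • (us.1 + u1))
    have hpt : ∀ p : Fin M × Fin M,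
        h ^ 2 * ((A ((1/2 : ℝ) • (us.1 + u1)) - NN) p * (u1 - us.1) p)
        = (κ * gh * ((1/2 : ℝ) • (us.1 + u1)) p - NN p) * (u1 - us.1) p * h ^ 2
          - ε ^ 2 * ((u1 - us.1) p *
              (((1/2 : ℝ) • (us.1 + u1)) (p.1 + 1, p.2)
                + ((1/2 : ℝ) • (us.1 + u1)) (p.1 - 1, p.2)
                + ((1/2 : ℝ) • (us.1 + u1)) (p.1, p.2 + 1)
                + ((1/2 : ℝ) • (us.1 + u1)) (p.1, p.2 - 1)
                - 4 * ((1/2 : ℝ) • (us.1 + u1)) p)) := by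
      intro p
      simp only [Pi.sub_apply]
      rw [happA]
      field_simp
      ring
    rw [GSAV.gradE_sub hh' ε us.1 u1]
    unfold gridInner GSAV.dotP
    conv_rhs => rw [Finset.mul_sum, Finset.sum_congr rfl fun p _ => hpt p,
      Finset.sum_sub_distrib, ← Finset.mul_sum]
    rw [swap]
    simp only [Finset.mul_sum, ← Finset.sum_neg_distrib, ← Finset.sum_add_distrib,
      ← Finset.sum_sub_distrib]
    refine Finset.sum_congr rfl fun p _ => ?_
    simp only [hNp p, hm1, Pi.smul_apply, Pi.add_apply, Pi.sub_apply, smul_eq_mul]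
    ring
  have hfin : h ^ 2 * GSAV.dotP (A ((1/2 : ℝ) • (us.1 + u1)) - NN) (u1 - us.1) ≤ 0 := by
    have h2 := mul_le_mul_of_nonneg_left hcore (sq_nonneg h)
    simpa using h2
  unfold modE
  linarith [key, hfin]
end
end

section
/- For any stabilizing constant κ > 0, any time step τ > 0, any initial grid function u_init, and every n ≥ 0, the GSAV-EI2 iterates satisfy sⁿ ≤ E_h(u_init) and s̃^{n+1} ≤ E_h(u_init), where E_h(v) := (ε²/2)‖∇_h v‖² + E_{1h}(v). -/
open scoped BigOperators
noncomputable section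

/-! ### Auxiliary development for the energy-stability proof -/

section EnergyAux

open Filter MeasureTheory

variable {M : ℕ} [NeZero M] {h : ℝ}

/-- `v ↦ ⟨v, w⟩` as a continuous linear functional. -/
def giCLM (M : ℕ) (h : ℝ) (w : GridFun M) : GridFun M →L[ℝ] ℝ :=
  LinearMap.toContinuousLinearMap
  { toFun := fun v => gridInner M h v w
    map_add' := fun a b => by
      simp only [gridInner, Pi.add_apply, add_mul, Finset.sum_add_distrib, mul_add]
    map_smul' := fun c a => by
      simp only [gridInner, Pi.smul_apply, smul_eq_mul, RingHom.id_apply, Finset.mul_sum]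
      exact Finset.sum_congr rfl fun p _ => by ring }

lemma gi_eq (w v : GridFun M) : gridInner M h v w = giCLM M h w v := rfl

lemma gi_comm (v w : GridFun M) : gridInner M h v w = gridInner M h w v := by
  unfold gridInner
  congr 1
  exact Finset.sum_congr rfl fun p _ => mul_comm _ _

lemma gi_add_left (u v w : GridFun M) :
    gridInner M h (u + v) w = gridInner M h u w + gridInner M h v w := by
  rw [gi_eq w, map_add]; rfl

lemma gi_sub_left (u v w : GridFun M) :
    gridInner M h (u - v) w = gridInner M h u w - gridInner M h v w := by
  rw [gi_eq w, map_sub]; rfl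

lemma gi_smul_left (c : ℝ) (v w : GridFun M) :
    gridInner M h (c • v) w = c * gridInner M h v w := by
  rw [gi_eq w, _root_.map_smul]; rfl

lemma gi_add_right (u v w : GridFun M) :
    gridInner M h u (v + w) = gridInner M h u v + gridInner M h u w := by
  rw [gi_comm u (v + w), gi_add_left, gi_comm v u, gi_comm w u]

lemma gi_sub_right (u v w : GridFun M) :
    gridInner M h u (v - w) = gridInner M h u v - gridInner M h u w := by
  rw [gi_comm u (v - w), gi_sub_left, gi_comm v u, gi_comm w u]

lemma gi_smul_right (c : ℝ) (u v : GridFun M) :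
    gridInner M h u (c • v) = c * gridInner M h u v := by
  rw [gi_comm u (c • v), gi_smul_left, gi_comm v u]

lemma gi_sum_left {ι : Type*} (s : Finset ι) (x : ι → GridFun M) (w : GridFun M) :
    gridInner M h (∑ i ∈ s, x i) w = ∑ i ∈ s, gridInner M h (x i) w := by
  rw [gi_eq w, map_sum]
  simp only [← gi_eq]

lemma gi_nonneg (v : GridFun M) : 0 ≤ gridInner M h v v :=
  mul_nonneg (sq_nonneg h) (Finset.sum_nonneg fun p _ => mul_self_nonneg _)

/-- Symmetry of an operator w.r.t. the discrete inner product. -/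
def OpSymm (M : ℕ) (h : ℝ) (T : GridFun M →L[ℝ] GridFun M) : Prop :=
  ∀ v w, gridInner M h (T v) w = gridInner M h v (T w)

lemma OpSymm.smulOp {T : GridFun M →L[ℝ] GridFun M} (hT : OpSymm M h T) (c : ℝ) :
    OpSymm M h (c • T) := by
  intro v w
  simp only [ContinuousLinearMap.smul_apply]
  rw [gi_smul_left, hT v w, gi_smul_right]

lemma OpSymm.one : OpSymm M h (1 : GridFun M →L[ℝ] GridFun M) := fun v w => by
  simp only [ContinuousLinearMap.one_apply]

lemma OpSymm.subOp {S T : GridFun M →L[ℝ] GridFun M}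
    (hS : OpSymm M h S) (hT : OpSymm M h T) : OpSymm M h (S - T) := by
  intro v w
  simp only [ContinuousLinearMap.sub_apply]
  rw [gi_sub_left, hS v w, hT v w, gi_sub_right]

lemma OpSymm.powOp {T : GridFun M →L[ℝ] GridFun M} (hT : OpSymm M h T) :
    ∀ n : ℕ, OpSymm M h (T ^ n)
  | 0 => by
      intro v w
      rw [pow_zero]
      simp only [ContinuousLinearMap.one_apply]
  | n + 1 => by
      intro v w
      have e1 : (T ^ (n + 1)) v = (T ^ n) (T v) := by rw [pow_succ]; rfl
      have e2 : (T ^ (n + 1)) w = T ((T ^ n) w) := by rw [pow_succ']; rfl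
      rw [e1, e2, (hT.powOp n) (T v) w, hT v ((T ^ n) w)]

lemma OpSymm.sumOp {ι : Type*} (s : Finset ι) (x : ι → GridFun M →L[ℝ] GridFun M)
    (hx : ∀ i ∈ s, OpSymm M h (x i)) : OpSymm M h (∑ i ∈ s, x i) := by
  intro v w
  rw [ContinuousLinearMap.sum_apply, ContinuousLinearMap.sum_apply, gi_sum_left,
    gi_comm v (∑ i ∈ s, x i w), gi_sum_left]
  exact Finset.sum_congr rfl fun i hi => (hx i hi v w).trans (gi_comm v (x i w))

lemma OpSymm.expOp {T : GridFun M →L[ℝ] GridFun M} (hT : OpSymm M h T) :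
    OpSymm M h (NormedSpace.exp T) := by
  intro v w
  set S : ℕ → GridFun M →L[ℝ] GridFun M :=
    fun N => ∑ n ∈ Finset.range N, ((n.factorial : ℝ))⁻¹ • T ^ n with hSdef
  have hS : ∀ N, OpSymm M h (S N) := fun N =>
    OpSymm.sumOp _ _ fun i _ => (hT.powOp i).smulOp _
  have hsum : HasSum (fun n : ℕ => ((n.factorial : ℝ))⁻¹ • T ^ n) (NormedSpace.exp T) := by
    rw [NormedSpace.exp_eq_tsum ℝ]
    exact (NormedSpace.expSeries_summable' T).hasSum
  have h1 := hsum.tendsto_sum_nat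
  have cont : ∀ a b : GridFun M,
      Continuous fun U : GridFun M →L[ℝ] GridFun M => gridInner M h (U a) b := by
    intro a b
    simp only [gi_eq b]
    exact (giCLM M h b).continuous.comp (ContinuousLinearMap.apply ℝ (GridFun M) a).continuous
  have t1 : Tendsto (fun N => gridInner M h (S N v) w) atTop
      (nhds (gridInner M h (NormedSpace.exp T v) w)) :=
    ((cont v w).tendsto _).comp h1
  have t2 : Tendsto (fun N => gridInner M h (S N w) v) atTop
      (nhds (gridInner M h (NormedSpace.exp T w) v)) :=
    ((cont w v).tendsto _).comp h1
  have ht : (fun N => gridInner M h (S N v) w) = fun N => gridInner M h (S N w) v := by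
    funext N
    rw [hS N v w, gi_comm]
  rw [ht] at t1
  rw [gi_comm v (NormedSpace.exp T w)]
  exact tendsto_nhds_unique t1 t2

lemma exp_psd {T : GridFun M →L[ℝ] GridFun M} (hT : OpSymm M h T) (v : GridFun M) :
    0 ≤ gridInner M h (NormedSpace.exp T v) v := by
  have hsplit : NormedSpace.exp T
      = NormedSpace.exp ((1 / 2 : ℝ) • T) * NormedSpace.exp ((1 / 2 : ℝ) • T) := by
    letI : NormedAlgebra ℚ (GridFun M →L[ℝ] GridFun M) := NormedAlgebra.restrictScalars ℚ ℝ _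
    rw [← NormedSpace.exp_add_of_commute (Commute.refl _), ← add_smul]
    norm_num
  rw [hsplit, ContinuousLinearMap.mul_apply,
    (hT.smulOp (1 / 2 : ℝ)).expOp (NormedSpace.exp ((1 / 2 : ℝ) • T) v) v]
  exact gi_nonneg _

/-! #### Reindexing sums over the periodic grid -/

lemma sum_reindex_fst (e : Fin M ≃ Fin M) (G : Fin M × Fin M → ℝ) :
    ∑ p : Fin M × Fin M, G (e p.1, p.2) = ∑ p : Fin M × Fin M, G p :=
  Fintype.sum_equiv (e.prodCongr (Equiv.refl _)) _ _ fun ⟨_, _⟩ => rfl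

lemma sum_reindex_snd (e : Fin M ≃ Fin M) (G : Fin M × Fin M → ℝ) :
    ∑ p : Fin M × Fin M, G (p.1, e p.2) = ∑ p : Fin M × Fin M, G p :=
  Fintype.sum_equiv ((Equiv.refl _).prodCongr e) _ _ fun ⟨_, _⟩ => rfl

lemma shift_fst (G : Fin M × Fin M → ℝ) :
    ∑ p : Fin M × Fin M, G (p.1 + 1, p.2) = ∑ p : Fin M × Fin M, G p :=
  sum_reindex_fst (Equiv.addRight 1) G

lemma shift_snd (G : Fin M × Fin M → ℝ) :
    ∑ p : Fin M × Fin M, G (p.1, p.2 + 1) = ∑ p : Fin M × Fin M, G p :=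
  sum_reindex_snd (Equiv.addRight 1) G

lemma cross_fst (v w : GridFun M) :
    ∑ p : Fin M × Fin M, v (p.1 + 1, p.2) * w p
      = ∑ p : Fin M × Fin M, v p * w (p.1 - 1, p.2) := by
  have := sum_reindex_fst (M := M) (Equiv.addRight 1) (fun q => v q * w (q.1 - 1, q.2))
  simp only [Equiv.coe_addRight, add_sub_cancel_right] at this
  exact this

lemma cross_fst' (v w : GridFun M) :
    ∑ p : Fin M × Fin M, v (p.1 - 1, p.2) * w p
      = ∑ p : Fin M × Fin M, v p * w (p.1 + 1, p.2) := by
  have := sum_reindex_fst (M := M) (Equiv.subRight 1) (fun q => v q * w (q.1 + 1, q.2))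
  simp only [Equiv.subRight_apply, sub_add_cancel] at this
  exact this

lemma cross_snd (v w : GridFun M) :
    ∑ p : Fin M × Fin M, v (p.1, p.2 + 1) * w p
      = ∑ p : Fin M × Fin M, v p * w (p.1, p.2 - 1) := by
  have := sum_reindex_snd (M := M) (Equiv.addRight 1) (fun q => v q * w (q.1, q.2 - 1))
  simp only [Equiv.coe_addRight, add_sub_cancel_right] at this
  exact this

lemma cross_snd' (v w : GridFun M) :
    ∑ p : Fin M × Fin M, v (p.1, p.2 - 1) * w p
      = ∑ p : Fin M × Fin M, v p * w (p.1, p.2 + 1) := by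
  have := sum_reindex_snd (M := M) (Equiv.subRight 1) (fun q => v q * w (q.1, q.2 + 1))
  simp only [Equiv.subRight_apply, sub_add_cancel] at this
  exact this

lemma dLap_apply (v : GridFun M) (p : Fin M × Fin M) :
    dLap M h v p
      = (v (p.1 + 1, p.2) + v (p.1 - 1, p.2) + v (p.1, p.2 + 1) + v (p.1, p.2 - 1)
          - 4 * v p) / h ^ 2 := rfl

lemma gi_dLap (hh : h ≠ 0) (v w : GridFun M) :
    gridInner M h (dLap M h v) w
      = ∑ p : Fin M × Fin M,
          (v (p.1 + 1, p.2) + v (p.1 - 1, p.2) + v (p.1, p.2 + 1) + v (p.1, p.2 - 1)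
            - 4 * v p) * w p := by
  unfold gridInner
  simp only [dLap_apply, div_mul_eq_mul_div]
  rw [← Finset.sum_div, mul_comm (h ^ 2), div_mul_cancel₀ _ (pow_ne_zero 2 hh)]

lemma dLap_symm (hh : h ≠ 0) : OpSymm M h (dLap M h) := by
  intro v w
  rw [gi_dLap hh v w, gi_comm v (dLap M h w), gi_dLap hh w v]
  simp only [sub_mul, add_mul, Finset.sum_sub_distrib, Finset.sum_add_distrib]
  rw [cross_fst v w, cross_fst' v w, cross_snd v w, cross_snd' v w]
  have c1 : ∑ p : Fin M × Fin M, v p * w (p.1 - 1, p.2)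
      = ∑ p : Fin M × Fin M, w (p.1 - 1, p.2) * v p :=
    Finset.sum_congr rfl fun p _ => mul_comm _ _
  have c2 : ∑ p : Fin M × Fin M, v p * w (p.1 + 1, p.2)
      = ∑ p : Fin M × Fin M, w (p.1 + 1, p.2) * v p :=
    Finset.sum_congr rfl fun p _ => mul_comm _ _
  have c3 : ∑ p : Fin M × Fin M, v p * w (p.1, p.2 - 1)
      = ∑ p : Fin M × Fin M, w (p.1, p.2 - 1) * v p :=
    Finset.sum_congr rfl fun p _ => mul_comm _ _
  have c4 : ∑ p : Fin M × Fin M, v p * w (p.1, p.2 + 1)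
      = ∑ p : Fin M × Fin M, w (p.1, p.2 + 1) * v p :=
    Finset.sum_congr rfl fun p _ => mul_comm _ _
  have c5 : ∑ p : Fin M × Fin M, 4 * v p * w p
      = ∑ p : Fin M × Fin M, 4 * w p * v p :=
    Finset.sum_congr rfl fun p _ => by ring
  rw [c1, c2, c3, c4, c5]
  ring

lemma gradE_eq (hh : h ≠ 0) (ε : ℝ) (v : GridFun M) :
    gradE M h ε v = -(ε ^ 2 / 2) * gridInner M h (dLap M h v) v := by
  have key : ∑ p : Fin M × Fin M,
      ((v (p.1 + 1, p.2) - v p) ^ 2 + (v (p.1, p.2 + 1) - v p) ^ 2)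
      = -∑ p : Fin M × Fin M,
          (v (p.1 + 1, p.2) + v (p.1 - 1, p.2) + v (p.1, p.2 + 1) + v (p.1, p.2 - 1)
            - 4 * v p) * v p := by
    have r1 : ∑ p : Fin M × Fin M, v (p.1 + 1, p.2) * v (p.1 + 1, p.2)
        = ∑ p : Fin M × Fin M, v p * v p := shift_fst (fun q => v q * v q)
    have r2 : ∑ p : Fin M × Fin M, v (p.1, p.2 + 1) * v (p.1, p.2 + 1)
        = ∑ p : Fin M × Fin M, v p * v p := shift_snd (fun q => v q * v q)
    have c1 : ∑ p : Fin M × Fin M, v (p.1 - 1, p.2) * v p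
        = ∑ p : Fin M × Fin M, v (p.1 + 1, p.2) * v p := by
      rw [cross_fst' v v]
      exact Finset.sum_congr rfl fun p _ => mul_comm _ _
    have c2 : ∑ p : Fin M × Fin M, v (p.1, p.2 - 1) * v p
        = ∑ p : Fin M × Fin M, v (p.1, p.2 + 1) * v p := by
      rw [cross_snd' v v]
      exact Finset.sum_congr rfl fun p _ => mul_comm _ _
    have expL : ∀ p : Fin M × Fin M,
        (v (p.1 + 1, p.2) - v p) ^ 2 + (v (p.1, p.2 + 1) - v p) ^ 2
          = (v (p.1 + 1, p.2) * v (p.1 + 1, p.2) + v (p.1, p.2 + 1) * v (p.1, p.2 + 1))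
            + 2 * (v p * v p)
            - 2 * (v (p.1 + 1, p.2) * v p) - 2 * (v (p.1, p.2 + 1) * v p) := by
      intro p; ring
    have expR : ∀ p : Fin M × Fin M,
        (v (p.1 + 1, p.2) + v (p.1 - 1, p.2) + v (p.1, p.2 + 1) + v (p.1, p.2 - 1)
            - 4 * v p) * v p
          = v (p.1 + 1, p.2) * v p + v (p.1 - 1, p.2) * v p + v (p.1, p.2 + 1) * v p
            + v (p.1, p.2 - 1) * v p - 4 * (v p * v p) := by
      intro p; ring
    simp only [expL, expR, Finset.sum_add_distrib, Finset.sum_sub_distrib, ← Finset.mul_sum]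
    rw [r1, r2, c1, c2]
    ring
  rw [gi_dLap hh v v]
  unfold gradE
  simp only [div_pow, ← add_div]
  rw [← Finset.sum_div, mul_comm (h ^ 2), div_mul_cancel₀ _ (pow_ne_zero 2 hh), key]
  ring

lemma gradE_nonneg (ε : ℝ) (v : GridFun M) : 0 ≤ gradE M h ε v := by
  unfold gradE
  have : 0 ≤ ∑ p : Fin M × Fin M,
      (((v (p.1 + 1, p.2) - v p) / h) ^ 2 + ((v (p.1, p.2 + 1) - v p) / h) ^ 2) :=
    Finset.sum_nonneg fun p _ => add_nonneg (sq_nonneg _) (sq_nonneg _)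
  positivity

lemma gi_dLap_self_nonpos (hh : h ≠ 0) (v : GridFun M) :
    gridInner M h (dLap M h v) v ≤ 0 := by
  have h2 : (Real.sqrt 2) ^ 2 = 2 := Real.sq_sqrt (by norm_num)
  have hge := gradE_nonneg (M := M) (h := h) (Real.sqrt 2) v
  rw [gradE_eq hh (Real.sqrt 2) v, h2] at hge
  linarith

/-! #### Operator-integral facts -/

set_option synthInstance.maxHeartbeats 1000000 in
lemma smul_commute_self (a : ℝ) (X : GridFun M →L[ℝ] GridFun M) : Commute (a • X) X := by
  unfold Commute SemiconjBy
  rw [smul_mul_assoc, mul_smul_comm]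

set_option synthInstance.maxHeartbeats 1000000 in
lemma smul_commute_smul (a b : ℝ) (X : GridFun M →L[ℝ] GridFun M) :
    Commute (a • X) (b • X) := by
  unfold Commute SemiconjBy
  rw [smul_mul_assoc, mul_smul_comm, smul_mul_assoc, mul_smul_comm, smul_smul, smul_smul,
    mul_comm a b]

lemma cont_exp_shift (Lk : GridFun M →L[ℝ] GridFun M) (d : ℝ) :
    Continuous fun θ : ℝ => NormedSpace.exp ((θ - d) • Lk) :=
  letI : NormedAlgebra ℚ (GridFun M →L[ℝ] GridFun M) := NormedAlgebra.restrictScalars ℚ ℝ _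
  NormedSpace.exp_continuous.comp ((continuous_id.sub continuous_const).smul continuous_const)

lemma cont_exp_apply (Lk : GridFun M →L[ℝ] GridFun M) (d : ℝ) (v : GridFun M) :
    Continuous fun θ : ℝ => NormedSpace.exp ((θ - d) • Lk) v :=
  (ContinuousLinearMap.apply ℝ (GridFun M) v).continuous.comp (cont_exp_shift Lk d)

section OpInt

variable (Lk : GridFun M →L[ℝ] GridFun M) (τ : ℝ)

lemma Aop_eq :
    (∫ θ in (0:ℝ)..τ, NormedSpace.exp (-((τ - θ) • Lk)))
      = ∫ θ in (0:ℝ)..τ, NormedSpace.exp ((θ - τ) • Lk) := by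
  refine intervalIntegral.integral_congr fun θ _ => ?_
  rw [← neg_smul (τ - θ) Lk, neg_sub]

lemma Aop_apply (v : GridFun M) :
    (∫ θ in (0:ℝ)..τ, NormedSpace.exp (-((τ - θ) • Lk))) v
      = ∫ θ in (0:ℝ)..τ, NormedSpace.exp ((θ - τ) • Lk) v := by
  rw [Aop_eq]
  exact ContinuousLinearMap.intervalIntegral_apply
    ((cont_exp_shift Lk τ).intervalIntegrable _ _) v

lemma gi_integral_left (w : GridFun M) (g : ℝ → GridFun M) (hg : Continuous g) :
    gridInner M h (∫ θ in (0:ℝ)..τ, g θ) w = ∫ θ in (0:ℝ)..τ, gridInner M h (g θ) w := by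
  rw [gi_eq w, ← ContinuousLinearMap.intervalIntegral_comp_comm _ (hg.intervalIntegrable _ _)]
  rfl

lemma Aop_symm (hsym : OpSymm M h Lk) :
    OpSymm M h (∫ θ in (0:ℝ)..τ, NormedSpace.exp (-((τ - θ) • Lk))) := by
  intro v w
  rw [gi_comm v ((∫ θ in (0:ℝ)..τ, NormedSpace.exp (-((τ - θ) • Lk))) w)]
  rw [Aop_apply Lk τ v, Aop_apply Lk τ w]
  rw [gi_integral_left τ w _ (cont_exp_apply Lk τ v),
    gi_integral_left τ v _ (cont_exp_apply Lk τ w)]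
  refine intervalIntegral.integral_congr fun θ _ => ?_
  rw [(hsym.smulOp (θ - τ)).expOp v w, gi_comm]

lemma Lk_mul_Aop (hτ : 0 ≤ τ) :
    Lk * (∫ θ in (0:ℝ)..τ, NormedSpace.exp (-((τ - θ) • Lk)))
      = 1 - NormedSpace.exp (-(τ • Lk)) := by
  rw [Aop_eq]
  have hd : ∀ θ ∈ Set.uIcc (0:ℝ) τ,
      HasDerivAt (fun t : ℝ => NormedSpace.exp ((t - τ) • Lk))
        (Lk * NormedSpace.exp ((θ - τ) • Lk)) θ := by
    intro θ _
    have h1 := hasDerivAt_exp_smul_const' (𝕂 := ℝ) Lk (θ - τ)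
    have h2 : HasDerivAt (fun t : ℝ => t - τ) 1 θ := (hasDerivAt_id θ).sub_const τ
    have h3 := h1.scomp θ h2
    simpa [Function.comp_def] using h3
  have hint : IntervalIntegrable
      (fun θ : ℝ => Lk * NormedSpace.exp ((θ - τ) • Lk)) volume 0 τ :=
    (continuous_const.mul (cont_exp_shift Lk τ)).intervalIntegrable _ _
  have hFTC := intervalIntegral.integral_eq_sub_of_hasDerivAt hd hint
  have hpull := (ContinuousLinearMap.mul ℝ (GridFun M →L[ℝ] GridFun M)
    Lk).intervalIntegral_comp_comm ((cont_exp_shift Lk τ).intervalIntegrable (μ := volume) 0 τ)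
  simp only [ContinuousLinearMap.mul_apply'] at hpull
  rw [hpull] at hFTC
  rw [hFTC, sub_self, zero_smul, NormedSpace.exp_zero, zero_sub,
    show (-τ) • Lk = -(τ • Lk) from neg_smul τ Lk]

lemma Aop_mul_Lk (hτ : 0 ≤ τ) :
    (∫ θ in (0:ℝ)..τ, NormedSpace.exp (-((τ - θ) • Lk))) * Lk
      = Lk * (∫ θ in (0:ℝ)..τ, NormedSpace.exp (-((τ - θ) • Lk))) := by
  rw [Aop_eq]
  have hflip := ((ContinuousLinearMap.mul ℝ (GridFun M →L[ℝ] GridFun M)).flip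
    Lk).intervalIntegral_comp_comm ((cont_exp_shift Lk τ).intervalIntegrable (μ := volume) 0 τ)
  have hl := (ContinuousLinearMap.mul ℝ (GridFun M →L[ℝ] GridFun M)
    Lk).intervalIntegral_comp_comm ((cont_exp_shift Lk τ).intervalIntegrable (μ := volume) 0 τ)
  simp only [ContinuousLinearMap.flip_apply, ContinuousLinearMap.mul_apply'] at hflip hl
  have hcomm : ∀ θ : ℝ, NormedSpace.exp ((θ - τ) • Lk) * Lk
      = Lk * NormedSpace.exp ((θ - τ) • Lk) := fun θ =>
    (((smul_commute_self (θ - τ) Lk)).exp_left).eq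
  calc (∫ θ in (0:ℝ)..τ, NormedSpace.exp ((θ - τ) • Lk)) * Lk
      = ∫ θ in (0:ℝ)..τ, NormedSpace.exp ((θ - τ) • Lk) * Lk := hflip.symm
    _ = ∫ θ in (0:ℝ)..τ, Lk * NormedSpace.exp ((θ - τ) • Lk) :=
        intervalIntegral.integral_congr fun θ _ => hcomm θ
    _ = Lk * ∫ θ in (0:ℝ)..τ, NormedSpace.exp ((θ - τ) • Lk) := hl

lemma Aop_exp_psd (hτ : 0 ≤ τ) (hsym : OpSymm M h Lk) (w : GridFun M) :
    0 ≤ gridInner M h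
      (((∫ θ in (0:ℝ)..τ, NormedSpace.exp (-((τ - θ) • Lk)))
        * NormedSpace.exp (-(τ • Lk))) w) w := by
  have hAE : (∫ θ in (0:ℝ)..τ, NormedSpace.exp (-((τ - θ) • Lk)))
      * NormedSpace.exp (-(τ • Lk))
      = ∫ θ in (0:ℝ)..τ, NormedSpace.exp ((θ - 2 * τ) • Lk) := by
    rw [Aop_eq]
    have hflip := ((ContinuousLinearMap.mul ℝ (GridFun M →L[ℝ] GridFun M)).flip
      (NormedSpace.exp (-(τ • Lk)))).intervalIntegral_comp_comm
      ((cont_exp_shift Lk τ).intervalIntegrable (μ := volume) 0 τ)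
    simp only [ContinuousLinearMap.flip_apply, ContinuousLinearMap.mul_apply'] at hflip
    rw [← hflip]
    refine intervalIntegral.integral_congr fun θ _ => ?_
    show NormedSpace.exp ((θ - τ) • Lk) * NormedSpace.exp (-(τ • Lk))
        = NormedSpace.exp ((θ - 2 * τ) • Lk)
    letI : NormedAlgebra ℚ (GridFun M →L[ℝ] GridFun M) := NormedAlgebra.restrictScalars ℚ ℝ _
    rw [show -(τ • Lk) = (-τ) • Lk from (neg_smul τ Lk).symm,
      ← NormedSpace.exp_add_of_commute (smul_commute_smul (θ - τ) (-τ) Lk), ← add_smul,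
      show θ - τ + -τ = θ - 2 * τ from by ring]
  rw [hAE, ContinuousLinearMap.intervalIntegral_apply
    ((cont_exp_shift Lk (2 * τ)).intervalIntegrable _ _) w,
    gi_integral_left τ w _ (cont_exp_apply Lk (2 * τ) w)]
  refine intervalIntegral.integral_nonneg hτ fun θ _ => ?_
  exact exp_psd (hsym.smulOp (θ - 2 * τ)) w

end OpInt

/-! #### Core one-step energy estimate -/

lemma Lkappa_symm (hh : h ≠ 0) (ε κ gh : ℝ) : OpSymm M h (Lkappa M h ε κ gh) :=
  (OpSymm.one.smulOp (κ * gh)).subOp ((dLap_symm hh).smulOp (ε ^ 2))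

lemma Lkappa_apply (ε κ gh : ℝ) (v : GridFun M) :
    Lkappa M h ε κ gh v = (κ * gh) • v - (ε ^ 2) • (dLap M h v) := by
  simp [Lkappa, ContinuousLinearMap.sub_apply, ContinuousLinearMap.smul_apply]

lemma core_step (hh : h ≠ 0) {ε κ τ gh : ℝ} (hε : ε ≠ 0) (hκ : 0 < κ) (hτ : 0 ≤ τ)
    (hg : 0 < gh) (u N u1 : GridFun M) (s s1 : ℝ)
    (hu1 : u1 = NormedSpace.exp (-(τ • Lkappa M h ε κ gh)) u
      + (∫ θ in (0:ℝ)..τ, NormedSpace.exp (-((τ - θ) • Lkappa M h ε κ gh))) N)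
    (hs1 : s1 ≤ s - gridInner M h (N - Lkappa M h ε κ gh u) (u1 - u)
          + ε ^ 2 * gridInner M h (dLap M h u) (u1 - u)
          + κ * gh / 2 * gridInner M h (u1 - u) (u1 - u)) :
    gradE M h ε u1 + s1 ≤ gradE M h ε u + s := by
  set Lk := Lkappa M h ε κ gh with hLk
  set A := ∫ θ in (0:ℝ)..τ, NormedSpace.exp (-((τ - θ) • Lk)) with hA
  set E := NormedSpace.exp (-(τ • Lk)) with hE
  set e := u1 - u with he
  set w := N - Lk u with hw
  have hsym : OpSymm M h Lk := by rw [hLk]; exact Lkappa_symm hh ε κ gh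
  have hAsym : OpSymm M h A := by rw [hA]; exact Aop_symm Lk τ hsym
  have hLA : Lk * A = 1 - E := by rw [hA, hE]; exact Lk_mul_Aop Lk τ hτ
  have hAL : A * Lk = Lk * A := by rw [hA]; exact Aop_mul_Lk Lk τ hτ
  have h1AL : A (Lk u) = u - E u := by
    have h0 : A (Lk u) = (A * Lk) u := rfl
    rw [h0, hAL, hLA]
    simp [ContinuousLinearMap.sub_apply, ContinuousLinearMap.one_apply]
  have hF1 : e = A w := by
    rw [hw, map_sub, h1AL, he, hu1]
    abel
  have hEwe : 0 ≤ gridInner M h (E w) e := by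
    rw [hF1, ← hAsym (E w) w]
    have h3 : 0 ≤ gridInner M h ((A * E) w) w := by
      rw [hA, hE]
      exact Aop_exp_psd Lk τ hτ hsym w
    exact h3
  have hstar : gridInner M h (Lk e) e ≤ gridInner M h w e := by
    have h1 : Lk e = w - E w := by
      rw [hF1]
      have h0 : Lk (A w) = (Lk * A) w := rfl
      rw [h0, hLA]
      simp [ContinuousLinearMap.sub_apply, ContinuousLinearMap.one_apply]
    rw [h1, gi_sub_left]
    linarith
  have hF3 : gridInner M h (Lk e) e
      = κ * gh * gridInner M h e e - ε ^ 2 * gridInner M h (dLap M h e) e := by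
    rw [hLk, Lkappa_apply, gi_sub_left, gi_smul_left, gi_smul_left]
  have hu1e : u1 = u + e := by rw [he]; abel
  have hcross : gridInner M h (dLap M h e) u = gridInner M h (dLap M h u) e := by
    rw [dLap_symm hh e u, gi_comm e (dLap M h u)]
  have hgrad : gradE M h ε u1 = gradE M h ε u
      - ε ^ 2 * gridInner M h (dLap M h u) e - ε ^ 2 / 2 * gridInner M h (dLap M h e) e := by
    rw [gradE_eq hh ε u1, gradE_eq hh ε u, hu1e, map_add, gi_add_left, gi_add_right,
      gi_add_right, hcross]
    ring
  have hQ : gridInner M h (dLap M h e) e ≤ 0 := gi_dLap_self_nonpos hh e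
  have hQ2 : ε ^ 2 * gridInner M h (dLap M h e) e ≤ 0 :=
    mul_nonpos_of_nonneg_of_nonpos (sq_nonneg ε) hQ
  have hS2 : 0 ≤ κ * gh * gridInner M h e e :=
    mul_nonneg (mul_nonneg hκ.le hg.le) (gi_nonneg e)
  linarith

lemma gFun_pos {F σ : ℝ → ℝ} (hσpos : ∀ x, 0 < σ x) (v : GridFun M) (r : ℝ) :
    0 < gFun M h F σ v r :=
  div_pos (hσpos _) (hσpos _)

lemma EI1step_energy (hh : h ≠ 0) {ε κ τ : ℝ} (hε : ε ≠ 0) (hκ : 0 < κ) (hτ : 0 ≤ τ)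
    {f F σ : ℝ → ℝ} (hσpos : ∀ x, 0 < σ x) (us : GridFun M × ℝ) :
    gradE M h ε (EI1step M h ε κ τ f F σ us).1 + (EI1step M h ε κ τ f F σ us).2
      ≤ gradE M h ε us.1 + us.2 := by
  set gh := gFun M h F σ us.1 us.2 with hgh
  have hg : 0 < gh := gFun_pos hσpos _ _
  set N := Nkappa M h κ gh f F σ us.1 us.2 with hN
  set u1 := (EI1step M h ε κ τ f F σ us).1 with hu1def
  have hu1 : u1 = NormedSpace.exp (-(τ • Lkappa M h ε κ gh)) us.1
      + (∫ θ in (0:ℝ)..τ, NormedSpace.exp (-((τ - θ) • Lkappa M h ε κ gh))) N := rfl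
  have hval : (EI1step M h ε κ τ f F σ us).2
      = us.2 - gh * gridInner M h (fun p => f (us.1 p)) (u1 - us.1) := rfl
  have hNu : gh • (fun p => f (us.1 p)) = N - (κ * gh) • us.1 := by
    funext p
    show gh * f (us.1 p) = N p - (κ * gh) * us.1 p
    rw [hN]
    show gh * f (us.1 p)
      = (gFun M h F σ us.1 us.2 * f (us.1 p) + κ * gh * us.1 p) - κ * gh * us.1 p
    rw [← hgh]
    ring
  have h3 : (ε ^ 2) • (dLap M h us.1) + Lkappa M h ε κ gh us.1 - (κ * gh) • us.1
      = (0 : GridFun M) := by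
    rw [Lkappa_apply]
    abel
  have hfe : gh * gridInner M h (fun p => f (us.1 p)) (u1 - us.1)
      = gridInner M h N (u1 - us.1)
        - gridInner M h (Lkappa M h ε κ gh us.1) (u1 - us.1)
        - ε ^ 2 * gridInner M h (dLap M h us.1) (u1 - us.1) := by
    have h1 : gh * gridInner M h (fun p => f (us.1 p)) (u1 - us.1)
        = gridInner M h (N - (κ * gh) • us.1) (u1 - us.1) := by
      rw [← hNu, gi_smul_left]
    have h2 : N - (κ * gh) • us.1
        = N - Lkappa M h ε κ gh us.1 - (ε ^ 2) • (dLap M h us.1)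
          + ((ε ^ 2) • (dLap M h us.1) + Lkappa M h ε κ gh us.1 - (κ * gh) • us.1) := by
      abel
    rw [h1, h2, h3, add_zero]
    simp only [gi_sub_left, gi_smul_left]
  refine core_step hh hε hκ hτ hg us.1 N u1 us.2 _ hu1 ?_
  rw [hval]
  simp only [gi_sub_left]
  have hpos : 0 ≤ κ * gh / 2
      * (gridInner M h u1 (u1 - us.1) - gridInner M h us.1 (u1 - us.1)) := by
    rw [← gi_sub_left]
    exact mul_nonneg (by positivity) (gi_nonneg _)
  linarith [hfe]

lemma EI2step_energy (hh : h ≠ 0) {ε κ τ : ℝ} (hε : ε ≠ 0) (hκ : 0 < κ) (hτ : 0 ≤ τ)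
    {f F σ : ℝ → ℝ} (hσpos : ∀ x, 0 < σ x) (us : GridFun M × ℝ) :
    gradE M h ε (EI2step M h ε κ τ f F σ us).1 + (EI2step M h ε κ τ f F σ us).2
      ≤ gradE M h ε us.1 + us.2 := by
  set t := EI1step M h ε κ τ f F σ us with ht
  set m := EI2half M h ε κ τ f F σ us with hm
  set gh := gFun M h F σ m.1 m.2 with hgh
  have hg : 0 < gh := gFun_pos hσpos _ _
  set N := Nkappa M h κ gh f F σ m.1 m.2 with hN
  set u1 := (EI2step M h ε κ τ f F σ us).1 with hu1def
  have hu1 : u1 = NormedSpace.exp (-(τ • Lkappa M h ε κ gh)) us.1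
      + (∫ θ in (0:ℝ)..τ, NormedSpace.exp (-((τ - θ) • Lkappa M h ε κ gh))) N := rfl
  have hval : (EI2step M h ε κ τ f F σ us).2
      = us.2 - gh * gridInner M h (fun p => f (m.1 p)) (u1 - us.1)
        + κ / 2 * gh * gridInner M h (u1 - t.1) (u1 - us.1) := rfl
  have hm1 : m.1 = (1 / 2 : ℝ) • (us.1 + t.1) := rfl
  have hNu : gh • (fun p => f (m.1 p)) = N - (κ * gh) • m.1 := by
    funext p
    show gh * f (m.1 p) = N p - (κ * gh) * m.1 p
    rw [hN]
    show gh * f (m.1 p)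
      = (gFun M h F σ m.1 m.2 * f (m.1 p) + κ * gh * m.1 p) - κ * gh * m.1 p
    rw [← hgh]
    ring
  have h3 : (ε ^ 2) • (dLap M h us.1) + Lkappa M h ε κ gh us.1 - (κ * gh) • us.1
      = (0 : GridFun M) := by
    rw [Lkappa_apply]
    abel
  have hfe : gh * gridInner M h (fun p => f (m.1 p)) (u1 - us.1)
      = gridInner M h N (u1 - us.1)
        - gridInner M h (Lkappa M h ε κ gh us.1) (u1 - us.1)
        - ε ^ 2 * gridInner M h (dLap M h us.1) (u1 - us.1)
        - κ * gh * gridInner M h m.1 (u1 - us.1)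
        + κ * gh * gridInner M h us.1 (u1 - us.1) := by
    have h1 : gh * gridInner M h (fun p => f (m.1 p)) (u1 - us.1)
        = gridInner M h (N - (κ * gh) • m.1) (u1 - us.1) := by
      rw [← hNu, gi_smul_left]
    have h2 : N - (κ * gh) • m.1
        = N - Lkappa M h ε κ gh us.1 - (ε ^ 2) • (dLap M h us.1)
          + ((ε ^ 2) • (dLap M h us.1) + Lkappa M h ε κ gh us.1 - (κ * gh) • us.1)
          + ((κ * gh) • us.1 - (κ * gh) • m.1) := by
      abel
    rw [h1, h2, h3, add_zero]
    simp only [gi_add_left, gi_sub_left, gi_smul_left]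
    ring
  have hmid : κ * gh * gridInner M h m.1 (u1 - us.1)
      = κ * gh * ((gridInner M h us.1 (u1 - us.1) + gridInner M h t.1 (u1 - us.1)) / 2) := by
    rw [hm1, gi_smul_left, gi_add_left]
    ring
  refine core_step hh hε hκ hτ hg us.1 N u1 us.2 _ hu1 ?_
  rw [hval]
  simp only [gi_sub_left]
  linarith [hfe, hmid]

end EnergyAux

/-- For any `κ > 0`, `τ > 0`, initial grid function, and `n ≥ 0`, the GSAV-EI2 iterates satisfy
`sⁿ ≤ E_h(u_init)` and the prediction satisfies `s̃^{n+1} ≤ E_h(u_init)`. -/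
theorem stmt_12 (M : ℕ) [NeZero M] (L h ε : ℝ) (hL : 0 < L) (hh : h = L / M) (hε : 0 < ε)
    (f F σ : ℝ → ℝ) (hF : ∀ x, HasDerivAt F (-f x) x)
    (hσ : ContDiff ℝ 1 σ) (hσpos : ∀ x, 0 < σ x) (hσmono : ∀ x, 0 ≤ deriv σ x)
    (κ : ℝ) (hκ : 0 < κ) (hf : ContDiff ℝ 1 f)
    (τ : ℝ) (hτ : 0 < τ) (uinit : GridFun M) :
    ∀ n : ℕ,
      (EI2 M h ε κ τ f F σ uinit n).2 ≤ Eh M h ε F uinit ∧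
      (EI1step M h ε κ τ f F σ (EI2 M h ε κ τ f F σ uinit n)).2 ≤ Eh M h ε F uinit := by
  have hMpos : 0 < (M : ℝ) := by
    exact_mod_cast Nat.pos_of_ne_zero (NeZero.ne M)
  have hhpos : 0 < h := by
    rw [hh]; exact div_pos hL hMpos
  have hhne : h ≠ 0 := ne_of_gt hhpos
  have hεne : ε ≠ 0 := ne_of_gt hε
  have hτ0 : 0 ≤ τ := hτ.le
  have key : ∀ n : ℕ,
      gradE M h ε (EI2 M h ε κ τ f F σ uinit n).1 + (EI2 M h ε κ τ f F σ uinit n).2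
        ≤ Eh M h ε F uinit := by
    intro n
    induction n with
    | zero => exact le_of_eq rfl
    | succ n ih =>
        have hstep := EI2step_energy (M := M) (f := f) (F := F) hhne hεne hκ hτ0 hσpos
          (EI2 M h ε κ τ f F σ uinit n)
        have hEq : EI2 M h ε κ τ f F σ uinit (n + 1)
            = EI2step M h ε κ τ f F σ (EI2 M h ε κ τ f F σ uinit n) := rfl
        rw [hEq]
        linarith
  intro n
  constructor
  · have h1 := key n
    have h2 := gradE_nonneg (M := M) (h := h) ε (EI2 M h ε κ τ f F σ uinit n).1
    linarith
  · have h1 := EI1step_energy (M := M) (f := f) (F := F) hhne hεne hκ hτ0 hσpos (EI2 M h ε κ τ f F σ uinit n)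
    have h2 := key n
    have h3 := gradE_nonneg (M := M) (h := h) ε
      (EI1step M h ε κ τ f F σ (EI2 M h ε κ τ f F σ uinit n)).1
    linarith
end
end

section
/- (MBP of GSAV-EI2.) Suppose β > 0 satisfies f(β) ≤ 0 ≤ f(−β) and κ ≥ max_{|ξ|≤β} |f'(ξ)|. Then for any time step τ > 0: if ‖u_init‖_∞ ≤ β, then the GSAV-EI2 iterates satisfy ‖uⁿ‖_∞ ≤ β for every n ≥ 0. -/
open scoped BigOperators
noncomputable section

/-- the positive neighbor-sum operator -/
def auxKop (M : ℕ) [NeZero M] (h ε : ℝ) : GridFun M →L[ℝ] GridFun M :=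
  LinearMap.toContinuousLinearMap
  { toFun := fun v => fun p =>
      ε ^ 2 / h ^ 2 * (v (p.1 + 1, p.2) + v (p.1 - 1, p.2) + v (p.1, p.2 + 1) + v (p.1, p.2 - 1))
    map_add' := by intro v w; funext p; simp only [Pi.add_apply]; ring
    map_smul' := by intro c v; funext p; simp only [Pi.smul_apply, smul_eq_mul, RingHom.id_apply]; ring }

lemma Lkappa_decomp (M : ℕ) [NeZero M] (h ε κ g0 : ℝ) (hh : h ≠ 0) :
    Lkappa M h ε κ g0 = (κ * g0 + 4 * ε ^ 2 / h ^ 2) • (1 : GridFun M →L[ℝ] GridFun M)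
      - auxKop M h ε := by
  ext v p
  simp only [Lkappa, auxKop, dLap, dLapL, ContinuousLinearMap.coe_sub', Pi.sub_apply,
    ContinuousLinearMap.coe_smul', Pi.smul_apply, ContinuousLinearMap.one_apply,
    LinearMap.coe_toContinuousLinearMap', LinearMap.coe_mk, AddHom.coe_mk, smul_eq_mul]
  field_simp
  ring

lemma Kop_apply_norm (M : ℕ) [NeZero M] (h ε : ℝ) (v : GridFun M) :
    ‖auxKop M h ε v‖ ≤ 4 * ε ^ 2 / h ^ 2 * ‖v‖ := by
  have h4 : (0:ℝ) ≤ ε ^ 2 / h ^ 2 := div_nonneg (sq_nonneg _) (sq_nonneg _)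
  refine (pi_norm_le_iff_of_nonneg (by positivity)).2 fun p => ?_
  have hb : ∀ q : Fin M × Fin M, |v q| ≤ ‖v‖ := fun q => norm_le_pi_norm v q
  simp only [auxKop, LinearMap.coe_toContinuousLinearMap', LinearMap.coe_mk, AddHom.coe_mk,
    Real.norm_eq_abs]
  rw [abs_mul, abs_of_nonneg h4]
  calc ε ^ 2 / h ^ 2 * |v (p.1 + 1, p.2) + v (p.1 - 1, p.2) + v (p.1, p.2 + 1) + v (p.1, p.2 - 1)|
      ≤ ε ^ 2 / h ^ 2 * (‖v‖ + ‖v‖ + ‖v‖ + ‖v‖) := by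
        refine mul_le_mul_of_nonneg_left ?_ h4
        calc |v (p.1 + 1, p.2) + v (p.1 - 1, p.2) + v (p.1, p.2 + 1) + v (p.1, p.2 - 1)|
            ≤ |v (p.1 + 1, p.2) + v (p.1 - 1, p.2) + v (p.1, p.2 + 1)| + |v (p.1, p.2 - 1)| :=
              abs_add_le _ _
          _ ≤ (|v (p.1 + 1, p.2) + v (p.1 - 1, p.2)| + |v (p.1, p.2 + 1)|) + |v (p.1, p.2 - 1)| := by
              gcongr; exact abs_add_le _ _
          _ ≤ ((|v (p.1 + 1, p.2)| + |v (p.1 - 1, p.2)|) + |v (p.1, p.2 + 1)|) + |v (p.1, p.2 - 1)| := by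
              gcongr; exact abs_add_le _ _
          _ ≤ ‖v‖ + ‖v‖ + ‖v‖ + ‖v‖ := by gcongr <;> exact hb _
    _ = 4 * ε ^ 2 / h ^ 2 * ‖v‖ := by ring

set_option maxHeartbeats 1000000 in
set_option synthInstance.maxHeartbeats 200000 in
lemma exp_Lkappa_apply_norm (M : ℕ) [NeZero M] (h ε κ g0 : ℝ) (hh : 0 < h) (t : ℝ) (ht : 0 ≤ t)
    (v : GridFun M) :
    ‖(NormedSpace.exp (-(t • Lkappa M h ε κ g0))) v‖ ≤ Real.exp (-(κ * g0 * t)) * ‖v‖ := by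
  set a : ℝ := 4 * ε ^ 2 / h ^ 2 with ha_def
  have ha : 0 ≤ a := by positivity
  have hpow : ∀ n : ℕ, ∀ w : GridFun M, ‖((t • auxKop M h ε) ^ n) w‖ ≤ (t * a) ^ n * ‖w‖ := by
    intro n
    induction n with
    | zero => intro w; simp
    | succ n ih =>
      intro w
      rw [pow_succ']
      calc ‖(t • auxKop M h ε) (((t • auxKop M h ε) ^ n) w)‖
          ≤ t * a * ‖((t • auxKop M h ε) ^ n) w‖ := by
            rw [ContinuousLinearMap.smul_apply, norm_smul, Real.norm_eq_abs, abs_of_nonneg ht]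
            rw [mul_assoc]
            exact mul_le_mul_of_nonneg_left (Kop_apply_norm M h ε _) ht
        _ ≤ t * a * ((t * a) ^ n * ‖w‖) :=
            mul_le_mul_of_nonneg_left (ih w) (by positivity)
        _ = (t * a) ^ (n + 1) * ‖w‖ := by ring
  have hdecomp : -(t • Lkappa M h ε κ g0)
      = t • auxKop M h ε + (-(t * (κ * g0 + a))) • (1 : GridFun M →L[ℝ] GridFun M) := by
    rw [Lkappa_decomp M h ε κ g0 hh.ne']
    ext v p
    simp only [auxKop, ContinuousLinearMap.neg_apply, ContinuousLinearMap.smul_apply,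
      ContinuousLinearMap.sub_apply, ContinuousLinearMap.add_apply, ContinuousLinearMap.one_apply,
      Pi.neg_apply, Pi.smul_apply, Pi.sub_apply, Pi.add_apply, smul_eq_mul,
      LinearMap.coe_toContinuousLinearMap', LinearMap.coe_mk, AddHom.coe_mk]
    ring
  have hcomm : Commute (t • auxKop M h ε)
      ((-(t * (κ * g0 + a))) • (1 : GridFun M →L[ℝ] GridFun M)) :=
    (Commute.one_right _).smul_right _
  letI : NormedAlgebra ℚ (GridFun M →L[ℝ] GridFun M) := NormedAlgebra.restrictScalars ℚ ℝ _
  rw [hdecomp, NormedSpace.exp_add_of_commute hcomm]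
  have hexp1 : NormedSpace.exp ((-(t * (κ * g0 + a))) • (1 : GridFun M →L[ℝ] GridFun M))
      = Real.exp (-(t * (κ * g0 + a))) • (1 : GridFun M →L[ℝ] GridFun M) := by
    rw [← Algebra.algebraMap_eq_smul_one, ← NormedSpace.algebraMap_exp_comm,
      Algebra.algebraMap_eq_smul_one, Real.exp_eq_exp_ℝ]
  rw [hexp1]
  have : (NormedSpace.exp (t • auxKop M h ε) *
      (Real.exp (-(t * (κ * g0 + a))) • (1 : GridFun M →L[ℝ] GridFun M))) v
      = Real.exp (-(t * (κ * g0 + a))) • (NormedSpace.exp (t • auxKop M h ε)) v := by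
    rw [ContinuousLinearMap.mul_apply, ContinuousLinearMap.smul_apply,
      ContinuousLinearMap.one_apply, ContinuousLinearMap.map_smul]
  rw [this, norm_smul, Real.norm_eq_abs, Real.abs_exp]
  have hKbound : ‖(NormedSpace.exp (t • auxKop M h ε)) v‖ ≤ Real.exp (t * a) * ‖v‖ := by
    simp only [NormedSpace.exp_eq_tsum ℝ]
    have hsum := NormedSpace.expSeries_summable' (𝕂 := ℝ) (t • auxKop M h ε)
    have happ : (∑' (n : ℕ), ((n.factorial : ℝ)⁻¹ • (t • auxKop M h ε) ^ n)) v
        = ∑' (n : ℕ), ((n.factorial : ℝ)⁻¹ • (t • auxKop M h ε) ^ n) v :=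
      (ContinuousLinearMap.apply ℝ (GridFun M) v).map_tsum hsum
    rw [happ]
    have hg : HasSum (fun n : ℕ => (n.factorial : ℝ)⁻¹ * (t * a) ^ n * ‖v‖) (Real.exp (t * a) * ‖v‖) := by
      have := (NormedSpace.exp_series_hasSum_exp' (𝕂 := ℝ) (t * a)).mul_right ‖v‖
      rw [← Real.exp_eq_exp_ℝ] at this
      simpa [smul_eq_mul] using this
    refine tsum_of_norm_bounded hg fun n => ?_
    rw [ContinuousLinearMap.smul_apply, norm_smul, Real.norm_eq_abs, abs_inv, Nat.abs_cast,
      mul_assoc]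
    exact mul_le_mul_of_nonneg_left (hpow n v) (by positivity)
  calc Real.exp (-(t * (κ * g0 + a))) * ‖(NormedSpace.exp (t • auxKop M h ε)) v‖
      ≤ Real.exp (-(t * (κ * g0 + a))) * (Real.exp (t * a) * ‖v‖) :=
        mul_le_mul_of_nonneg_left hKbound (Real.exp_nonneg _)
    _ = Real.exp (-(t * (κ * g0 + a))) * Real.exp (t * a) * ‖v‖ := by ring
    _ = Real.exp (-(κ * g0 * t)) * ‖v‖ := by rw [← Real.exp_add]; congr 2; ring

lemma auxKeyStep (M : ℕ) [NeZero M] (h ε κ g0 : ℝ) (hh : 0 < h) (hc : 0 < κ * g0)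
    (τ : ℝ) (hτ : 0 < τ) (β : ℝ) (u N : GridFun M) (hu : ‖u‖ ≤ β) (hN : ‖N‖ ≤ κ * g0 * β) :
    ‖(NormedSpace.exp (-(τ • Lkappa M h ε κ g0))) u +
      (∫ θ in (0:ℝ)..τ, NormedSpace.exp (-((τ - θ) • Lkappa M h ε κ g0))) N‖ ≤ β := by
  set c : ℝ := κ * g0 with hc_def
  have hβ0 : 0 ≤ β := le_trans (norm_nonneg u) hu
  -- continuity of the operator family
  letI : NormedAlgebra ℚ (GridFun M →L[ℝ] GridFun M) := NormedAlgebra.restrictScalars ℚ ℝ _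
  have hcont : Continuous fun θ : ℝ => NormedSpace.exp (-((τ - θ) • Lkappa M h ε κ g0)) :=
    NormedSpace.exp_continuous.comp
      (((continuous_const.sub continuous_id).smul continuous_const).neg)
  have hint : IntervalIntegrable
      (fun θ : ℝ => NormedSpace.exp (-((τ - θ) • Lkappa M h ε κ g0)))
      MeasureTheory.volume 0 τ := hcont.intervalIntegrable 0 τ
  -- commute application with the integral
  have happly : (∫ θ in (0:ℝ)..τ, NormedSpace.exp (-((τ - θ) • Lkappa M h ε κ g0))) N
      = ∫ θ in (0:ℝ)..τ, (NormedSpace.exp (-((τ - θ) • Lkappa M h ε κ g0))) N := by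
    rw [intervalIntegral.integral_of_le hτ.le, intervalIntegral.integral_of_le hτ.le]
    refine ContinuousLinearMap.integral_apply ?_ N
    have := intervalIntegrable_iff.mp hint
    rwa [Set.uIoc_of_le hτ.le] at this
  rw [happly]
  -- pointwise bound on the integrand
  have hptwise : ∀ θ ∈ Set.Ioc (0:ℝ) τ,
      ‖(NormedSpace.exp (-((τ - θ) • Lkappa M h ε κ g0))) N‖
        ≤ Real.exp (c * θ - c * τ) * ‖N‖ := by
    intro θ hθ
    have h1 := exp_Lkappa_apply_norm M h ε κ g0 hh (τ - θ) (by linarith [hθ.2]) N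
    have h2 : Real.exp (-(κ * g0 * (τ - θ))) = Real.exp (c * θ - c * τ) := by
      congr 1; rw [hc_def]; ring
    rwa [h2] at h1
  have hgint : IntervalIntegrable (fun θ : ℝ => Real.exp (c * θ - c * τ) * ‖N‖)
      MeasureTheory.volume 0 τ :=
    (((Real.continuous_exp.comp ((continuous_const.mul continuous_id).sub
      continuous_const)).mul continuous_const)).intervalIntegrable 0 τ
  have hbound : ‖∫ θ in (0:ℝ)..τ, (NormedSpace.exp (-((τ - θ) • Lkappa M h ε κ g0))) N‖
      ≤ |∫ θ in (0:ℝ)..τ, Real.exp (c * θ - c * τ) * ‖N‖| := by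
    refine le_trans (intervalIntegral.norm_integral_le_of_norm_le hτ.le ?_ hgint) (le_abs_self _)
    refine MeasureTheory.ae_of_all _ fun θ hθ => ?_
    exact hptwise θ hθ
  -- compute the integral
  have hderiv : ∀ θ ∈ Set.uIcc (0:ℝ) τ,
      HasDerivAt (fun x : ℝ => Real.exp (c * x - c * τ) / c) (Real.exp (c * θ - c * τ)) θ := by
    intro θ _
    have h1 : HasDerivAt (fun x : ℝ => c * x - c * τ) c θ := by
      simpa using ((hasDerivAt_id θ).const_mul c).sub_const (c * τ)
    have h2 := (h1.exp).div_const c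
    simpa [mul_div_assoc, mul_div_cancel_right₀ _ hc.ne'] using h2
  have hexpint : IntervalIntegrable (fun θ : ℝ => Real.exp (c * θ - c * τ))
      MeasureTheory.volume 0 τ :=
    ((Real.continuous_exp.comp ((continuous_const.mul continuous_id).sub
      continuous_const))).intervalIntegrable 0 τ
  have hval : (∫ θ in (0:ℝ)..τ, Real.exp (c * θ - c * τ))
      = (1 - Real.exp (-(c * τ))) / c := by
    rw [intervalIntegral.integral_eq_sub_of_hasDerivAt hderiv hexpint]
    rw [mul_comm c τ]
    rw [show c * 0 - τ * c = -(c * τ) by ring, show τ * c - τ * c = (0:ℝ) by ring]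
    rw [Real.exp_zero]
    ring
  have hval2 : (∫ θ in (0:ℝ)..τ, Real.exp (c * θ - c * τ) * ‖N‖)
      = (1 - Real.exp (-(c * τ))) / c * ‖N‖ := by
    rw [intervalIntegral.integral_mul_const, hval]
  have hexple : Real.exp (-(c * τ)) ≤ 1 := by
    rw [Real.exp_le_one_iff]; nlinarith
  have hexppos : 0 < Real.exp (-(c * τ)) := Real.exp_pos _
  have habs : |(1 - Real.exp (-(c * τ))) / c * ‖N‖| = (1 - Real.exp (-(c * τ))) / c * ‖N‖ := by
    refine abs_of_nonneg ?_
    have : 0 ≤ (1 - Real.exp (-(c * τ))) / c := div_nonneg (by linarith) hc.le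
    exact mul_nonneg this (norm_nonneg _)
  have hintbound : ‖∫ θ in (0:ℝ)..τ, (NormedSpace.exp (-((τ - θ) • Lkappa M h ε κ g0))) N‖
      ≤ (1 - Real.exp (-(c * τ))) * β := by
    calc ‖∫ θ in (0:ℝ)..τ, (NormedSpace.exp (-((τ - θ) • Lkappa M h ε κ g0))) N‖
        ≤ |∫ θ in (0:ℝ)..τ, Real.exp (c * θ - c * τ) * ‖N‖| := hbound
      _ = (1 - Real.exp (-(c * τ))) / c * ‖N‖ := by rw [hval2, habs]
      _ ≤ (1 - Real.exp (-(c * τ))) / c * (c * β) := by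
          refine mul_le_mul_of_nonneg_left hN (div_nonneg (by linarith) hc.le)
      _ = (1 - Real.exp (-(c * τ))) * β := by field_simp
  have hexpu : ‖(NormedSpace.exp (-(τ • Lkappa M h ε κ g0))) u‖
      ≤ Real.exp (-(c * τ)) * β := by
    calc ‖(NormedSpace.exp (-(τ • Lkappa M h ε κ g0))) u‖
        ≤ Real.exp (-(κ * g0 * τ)) * ‖u‖ := exp_Lkappa_apply_norm M h ε κ g0 hh τ hτ.le u
      _ ≤ Real.exp (-(c * τ)) * β :=
          mul_le_mul_of_nonneg_left hu (Real.exp_nonneg _)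
  calc ‖(NormedSpace.exp (-(τ • Lkappa M h ε κ g0))) u +
        ∫ θ in (0:ℝ)..τ, (NormedSpace.exp (-((τ - θ) • Lkappa M h ε κ g0))) N‖
      ≤ ‖(NormedSpace.exp (-(τ • Lkappa M h ε κ g0))) u‖ +
        ‖∫ θ in (0:ℝ)..τ, (NormedSpace.exp (-((τ - θ) • Lkappa M h ε κ g0))) N‖ :=
        norm_add_le _ _
    _ ≤ Real.exp (-(c * τ)) * β + (1 - Real.exp (-(c * τ))) * β := add_le_add hexpu hintbound
    _ = β := by ring

lemma auxScalarBound (f : ℝ → ℝ) (hf : ContDiff ℝ 1 f) (κ β : ℝ) (hβ : 0 < β)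
    (hfβ : f β ≤ 0) (hfβ' : 0 ≤ f (-β)) (hκf : ∀ ξ ∈ Set.Icc (-β) β, |deriv f ξ| ≤ κ) :
    ∀ x, |x| ≤ β → |f x + κ * x| ≤ κ * β := by
  have hdiff : Differentiable ℝ f := hf.differentiable one_ne_zero
  have hmono : MonotoneOn (fun x => f x + κ * x) (Set.Icc (-β) β) := by
    apply monotoneOn_of_deriv_nonneg (convex_Icc _ _)
    · exact (hdiff.continuous.add (continuous_const.mul continuous_id)).continuousOn
    · exact (hdiff.add ((differentiable_id.const_mul κ))).differentiableOn
    · intro x hx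
      rw [interior_Icc] at hx
      have h1 : HasDerivAt (fun y => f y + κ * y) (deriv f x + κ) x :=
        ((hdiff x).hasDerivAt).add (by simpa using (hasDerivAt_id x).const_mul κ)
      rw [h1.deriv]
      have h2 := abs_le.mp (hκf x (Set.mem_Icc_of_Ioo hx))
      linarith [h2.1]
  intro x hx
  obtain ⟨hx1, hx2⟩ := abs_le.mp hx
  have hxm : x ∈ Set.Icc (-β) β := ⟨hx1, hx2⟩
  have hlo := hmono (Set.left_mem_Icc.2 (by linarith)) hxm hx1
  have hhi := hmono hxm (Set.right_mem_Icc.2 (by linarith)) hx2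
  simp only at hlo hhi
  rw [abs_le]
  constructor <;> nlinarith

lemma auxNkappaBound (M : ℕ) (h κ β : ℝ) (hκ : 0 < κ) (hβ : 0 < β)
    (f F σ : ℝ → ℝ) (hσpos : ∀ x, 0 < σ x)
    (hf : ContDiff ℝ 1 f) (hfβ : f β ≤ 0) (hfβ' : 0 ≤ f (-β))
    (hκf : ∀ ξ ∈ Set.Icc (-β) β, |deriv f ξ| ≤ κ)
    (v : GridFun M) (r : ℝ) (hv : ‖v‖ ≤ β) :
    ‖Nkappa M h κ (gFun M h F σ v r) f F σ v r‖ ≤ κ * gFun M h F σ v r * β := by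
  have hg : 0 < gFun M h F σ v r := div_pos (hσpos _) (hσpos _)
  refine (pi_norm_le_iff_of_nonneg (by positivity)).2 fun p => ?_
  have hvp : |v p| ≤ β := le_trans (norm_le_pi_norm v p) hv
  have hsc := auxScalarBound f hf κ β hβ hfβ hfβ' hκf (v p) hvp
  simp only [Nkappa, Real.norm_eq_abs]
  calc |gFun M h F σ v r * f (v p) + κ * gFun M h F σ v r * v p|
      = gFun M h F σ v r * |f (v p) + κ * v p| := by
        rw [show gFun M h F σ v r * f (v p) + κ * gFun M h F σ v r * v p
          = gFun M h F σ v r * (f (v p) + κ * v p) by ring, abs_mul, abs_of_pos hg]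
    _ ≤ gFun M h F σ v r * (κ * β) := mul_le_mul_of_nonneg_left hsc hg.le
    _ = κ * gFun M h F σ v r * β := by ring

lemma auxMaster (M : ℕ) [NeZero M] (h ε κ τ β : ℝ) (hh : 0 < h) (hκ : 0 < κ) (hτ : 0 < τ)
    (hβ : 0 < β) (f F σ : ℝ → ℝ) (hσpos : ∀ x, 0 < σ x)
    (hf : ContDiff ℝ 1 f) (hfβ : f β ≤ 0) (hfβ' : 0 ≤ f (-β))
    (hκf : ∀ ξ ∈ Set.Icc (-β) β, |deriv f ξ| ≤ κ)
    (v : GridFun M) (r : ℝ) (u : GridFun M) (hv : ‖v‖ ≤ β) (hu : ‖u‖ ≤ β) :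
    ‖(NormedSpace.exp (-(τ • Lkappa M h ε κ (gFun M h F σ v r)))) u +
      (∫ θ in (0:ℝ)..τ, NormedSpace.exp (-((τ - θ) • Lkappa M h ε κ (gFun M h F σ v r))))
        (Nkappa M h κ (gFun M h F σ v r) f F σ v r)‖ ≤ β := by
  have hg : 0 < gFun M h F σ v r := div_pos (hσpos _) (hσpos _)
  exact auxKeyStep M h ε κ (gFun M h F σ v r) hh (mul_pos hκ hg) τ hτ β u _ hu
    (auxNkappaBound M h κ β hκ hβ f F σ hσpos hf hfβ hfβ' hκf v r hv)

/-- MBP of GSAV-EI2: if `f(β) ≤ 0 ≤ f(−β)` and `κ ≥ max_{|ξ|≤β} |f'(ξ)|`, then for any `τ > 0`,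
`‖u_init‖_∞ ≤ β` implies `‖uⁿ‖_∞ ≤ β` for every `n ≥ 0` (here `‖·‖` is the sup norm). -/
theorem stmt_13 (M : ℕ) [NeZero M] (L h ε : ℝ) (hL : 0 < L) (hh : h = L / M) (hε : 0 < ε)
    (f F σ : ℝ → ℝ) (hF : ∀ x, HasDerivAt F (-f x) x)
    (hσ : ContDiff ℝ 1 σ) (hσpos : ∀ x, 0 < σ x) (hσmono : ∀ x, 0 ≤ deriv σ x)
    (κ : ℝ) (hκ : 0 < κ) (hf : ContDiff ℝ 1 f)
    (β : ℝ) (hβ : 0 < β) (hfβ : f β ≤ 0) (hfβ' : 0 ≤ f (-β))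
    (hκf : ∀ ξ ∈ Set.Icc (-β) β, |deriv f ξ| ≤ κ)
    (τ : ℝ) (hτ : 0 < τ) (uinit : GridFun M) (hinit : ‖uinit‖ ≤ β) :
    ∀ n : ℕ, ‖(EI2 M h ε κ τ f F σ uinit n).1‖ ≤ β := by
  have hh0 : 0 < h := by
    have hM : (0:ℝ) < M := by exact_mod_cast Nat.pos_of_ne_zero (NeZero.ne M)
    rw [hh]; positivity
  have hstep : ∀ us : GridFun M × ℝ, ‖us.1‖ ≤ β → ‖(EI2step M h ε κ τ f F σ us).1‖ ≤ β := by
    intro us hus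
    have ht1 : ‖(EI1step M h ε κ τ f F σ us).1‖ ≤ β :=
      auxMaster M h ε κ τ β hh0 hκ hτ hβ f F σ hσpos hf hfβ hfβ' hκf us.1 us.2 us.1 hus hus
    have hm : ‖(EI2half M h ε κ τ f F σ us).1‖ ≤ β := by
      show ‖(1 / 2 : ℝ) • (us.1 + (EI1step M h ε κ τ f F σ us).1)‖ ≤ β
      rw [norm_smul]
      calc ‖(1 / 2 : ℝ)‖ * ‖us.1 + (EI1step M h ε κ τ f F σ us).1‖
          ≤ ‖(1 / 2 : ℝ)‖ * (‖us.1‖ + ‖(EI1step M h ε κ τ f F σ us).1‖) :=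
            mul_le_mul_of_nonneg_left (norm_add_le _ _) (norm_nonneg _)
        _ ≤ ‖(1 / 2 : ℝ)‖ * (β + β) := by
            refine mul_le_mul_of_nonneg_left (add_le_add hus ht1) (norm_nonneg _)
        _ = β := by rw [Real.norm_eq_abs]; rw [abs_of_pos (by norm_num : (0:ℝ) < 1/2)]; ring
    exact auxMaster M h ε κ τ β hh0 hκ hτ hβ f F σ hσpos hf hfβ hfβ' hκf
      (EI2half M h ε κ τ f F σ us).1 (EI2half M h ε κ τ f F σ us).2 us.1 hm hus
  intro n
  induction n with
  | zero => exact hinit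
  | succ n ih => exact hstep _ ih
end
end

section
/- (MBP of the stabilized generalized-SAV scheme.) Suppose β > 0 satisfies f(β) ≤ 0 ≤ f(−β) and κ ≥ max_{|ξ|≤β} |f'(ξ)|. Then for any time step τ > 0: if ‖u_init‖_∞ ≤ β, then the iterates of the stabilized generalized-SAV scheme satisfy ‖uⁿ‖_∞ ≤ β for every n ≥ 0. -/
open scoped BigOperators
noncomputable section

lemma sav_step_bound (M : ℕ) [NeZero M] (h ε κ τ β : ℝ) (hh0 : 0 < h) (hκ : 0 < κ)
    (hτ : 0 < τ) (hβ : 0 < β) (f F σ : ℝ → ℝ) (hσpos : ∀ x, 0 < σ x)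
    (hkey : ∀ ξ, |ξ| ≤ β → |f ξ + κ * ξ| ≤ κ * β)
    (us : GridFun M × ℝ) (hus : ‖us.1‖ ≤ β) :
    ‖(SAV1step M h ε κ τ f F σ us).1‖ ≤ β := by
  haveI : Nonempty (Fin M) := ⟨⟨0, Nat.pos_of_ne_zero (NeZero.ne M)⟩⟩
  set g0 := gFun M h F σ us.1 us.2 with hg0
  have hg0pos : 0 < g0 := div_pos (hσpos _) (hσpos _)
  set A := (1 : GridFun M →L[ℝ] GridFun M) + τ • Lkappa M h ε κ g0 with hA
  set w : GridFun M := us.1 + τ • Nkappa M h κ g0 f F σ us.1 us.2 with hw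
  have hstep : (SAV1step M h ε κ τ f F σ us).1 = Ring.inverse A w := rfl
  have hwb : ∀ p, |w p| ≤ (1 + τ * (κ * g0)) * β := by
    intro p
    have hup : |us.1 p| ≤ β := by
      have := norm_le_pi_norm us.1 p
      rw [Real.norm_eq_abs] at this
      exact this.trans hus
    have h1 : w p = us.1 p + τ * g0 * (f (us.1 p) + κ * us.1 p) := by
      simp only [hw, Pi.add_apply, Pi.smul_apply, smul_eq_mul, Nkappa]
      ring
    have h2 := hkey (us.1 p) hup
    have h3 := abs_le.mp h2
    have h4 := abs_le.mp hup
    have hpg : 0 < τ * g0 := mul_pos hτ hg0pos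
    rw [h1, abs_le]
    constructor <;> nlinarith
  by_cases hU : IsUnit A
  · have hAv : A (Ring.inverse A w) = w := by
      have hmul := Ring.mul_inverse_cancel A hU
      calc A (Ring.inverse A w) = (A * Ring.inverse A) w := rfl
        _ = w := by rw [hmul]; rfl
    set v : GridFun M := Ring.inverse A w with hv
    obtain ⟨p, hp⟩ := Finite.exists_max (fun q : Fin M × Fin M => |v q|)
    suffices hvp : |v p| ≤ β by
      rw [pi_norm_le_iff_of_nonneg hβ.le]
      intro q; rw [Real.norm_eq_abs]; exact (hp q).trans hvp
    set S : ℝ := v (p.1 + 1, p.2) + v (p.1 - 1, p.2) + v (p.1, p.2 + 1) + v (p.1, p.2 - 1)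
      with hS
    have heq : v p + τ * ((κ * g0) * v p - ε ^ 2 * ((S - 4 * v p) / h ^ 2)) = w p := by
      have := congrFun hAv p
      simpa [hA, Lkappa, dLap, dLapL, hS, LinearMap.coe_toContinuousLinearMap',
        ContinuousLinearMap.add_apply, ContinuousLinearMap.smul_apply,
        ContinuousLinearMap.one_apply, ContinuousLinearMap.sub_apply,
        Pi.add_apply, Pi.smul_apply, Pi.sub_apply, smul_eq_mul] using this
    have hwp := abs_le.mp (hwb p)
    have ha : 0 < 1 + τ * (κ * g0) := by positivity
    rcases le_or_gt 0 (v p) with hpos | hneg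
    · have hap : |v p| = v p := abs_of_nonneg hpos
      have hn : S ≤ 4 * v p := by
        have b1 : v (p.1 + 1, p.2) ≤ v p := (le_abs_self _).trans (hap ▸ hp _)
        have b2 : v (p.1 - 1, p.2) ≤ v p := (le_abs_self _).trans (hap ▸ hp _)
        have b3 : v (p.1, p.2 + 1) ≤ v p := (le_abs_self _).trans (hap ▸ hp _)
        have b4 : v (p.1, p.2 - 1) ≤ v p := (le_abs_self _).trans (hap ▸ hp _)
        rw [hS]; linarith
      have hD : (S - 4 * v p) / h ^ 2 ≤ 0 :=
        div_nonpos_of_nonpos_of_nonneg (by linarith) (by positivity)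
      have hD2 : τ * (ε ^ 2 * ((S - 4 * v p) / h ^ 2)) ≤ 0 := by
        have : ε ^ 2 * ((S - 4 * v p) / h ^ 2) ≤ 0 :=
          mul_nonpos_of_nonneg_of_nonpos (sq_nonneg ε) hD
        exact mul_nonpos_of_nonneg_of_nonpos hτ.le this
      rw [hap]
      nlinarith
    · have hap : |v p| = -v p := abs_of_neg hneg
      have hn : 4 * v p ≤ S := by
        have b1 : v p ≤ v (p.1 + 1, p.2) := by
          have := hap ▸ hp (p.1 + 1, p.2); have := neg_abs_le (v (p.1 + 1, p.2)); linarith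
        have b2 : v p ≤ v (p.1 - 1, p.2) := by
          have := hap ▸ hp (p.1 - 1, p.2); have := neg_abs_le (v (p.1 - 1, p.2)); linarith
        have b3 : v p ≤ v (p.1, p.2 + 1) := by
          have := hap ▸ hp (p.1, p.2 + 1); have := neg_abs_le (v (p.1, p.2 + 1)); linarith
        have b4 : v p ≤ v (p.1, p.2 - 1) := by
          have := hap ▸ hp (p.1, p.2 - 1); have := neg_abs_le (v (p.1, p.2 - 1)); linarith
        rw [hS]; linarith
      have hD : 0 ≤ (S - 4 * v p) / h ^ 2 :=
        div_nonneg (by linarith) (by positivity)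
      have hD2 : 0 ≤ τ * (ε ^ 2 * ((S - 4 * v p) / h ^ 2)) := by positivity
      rw [hap]
      nlinarith
  · rw [hstep, Ring.inverse_non_unit A hU]
    simpa using hβ.le

/-- MBP of the stabilized generalized-SAV scheme: if `f(β) ≤ 0 ≤ f(−β)` and
`κ ≥ max_{|ξ|≤β} |f'(ξ)|`, then for any `τ > 0`, `‖u_init‖_∞ ≤ β` implies `‖uⁿ‖_∞ ≤ β`
for every `n ≥ 0` (here `‖·‖` is the sup norm). -/
theorem stmt_19 (M : ℕ) [NeZero M] (L h ε : ℝ) (hL : 0 < L) (hh : h = L / M) (hε : 0 < ε)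
    (f F σ : ℝ → ℝ) (hF : ∀ x, HasDerivAt F (-f x) x)
    (hσ : ContDiff ℝ 1 σ) (hσpos : ∀ x, 0 < σ x) (hσmono : ∀ x, 0 ≤ deriv σ x)
    (κ : ℝ) (hκ : 0 < κ) (hf : ContDiff ℝ 1 f)
    (β : ℝ) (hβ : 0 < β) (hfβ : f β ≤ 0) (hfβ' : 0 ≤ f (-β))
    (hκf : ∀ ξ ∈ Set.Icc (-β) β, |deriv f ξ| ≤ κ)
    (τ : ℝ) (hτ : 0 < τ) (uinit : GridFun M) (hinit : ‖uinit‖ ≤ β) :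
    ∀ n : ℕ, ‖(SAV1 M h ε κ τ f F σ uinit n).1‖ ≤ β := by
  have hM : (0:ℝ) < M := by
    exact_mod_cast Nat.pos_of_ne_zero (NeZero.ne M)
  have hh0 : 0 < h := by rw [hh]; positivity
  have hkey : ∀ ξ, |ξ| ≤ β → |f ξ + κ * ξ| ≤ κ * β := by
    intro ξ hξ
    have hmono : MonotoneOn (fun x => f x + κ * x) (Set.Icc (-β) β) := by
      apply monotoneOn_of_deriv_nonneg (convex_Icc _ _)
      · exact (hf.continuous.add (continuous_const.mul continuous_id)).continuousOn
      · intro x hx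
        exact ((hf.differentiable one_ne_zero x).add
          ((differentiable_id.const_mul κ) x)).differentiableWithinAt
      · intro x hx
        have hx' : x ∈ Set.Icc (-β) β := interior_subset hx
        have hd : deriv (fun x => f x + κ * x) x = deriv f x + κ := by
          have hd' : HasDerivAt (fun x => f x + κ * x) (deriv f x + κ * 1) x :=
            ((hf.differentiable one_ne_zero x).hasDerivAt).add ((hasDerivAt_id x).const_mul κ)
          simpa using hd'.deriv
        rw [hd]
        have := abs_le.mp (hκf x hx')
        linarith [this.1]
    have hmem : ξ ∈ Set.Icc (-β) β := by
      have := abs_le.mp hξ; exact ⟨this.1, this.2⟩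
    have h1 := hmono hmem (Set.right_mem_Icc.mpr (by linarith)) hmem.2
    have h2 := hmono (Set.left_mem_Icc.mpr (by linarith)) hmem hmem.1
    simp only at h1 h2
    rw [abs_le]
    constructor <;> nlinarith
  intro n
  induction n with
  | zero => simpa [SAV1] using hinit
  | succ n ih =>
    rw [SAV1]
    exact sav_step_bound M h ε κ τ β hh0 hκ hτ hβ f F σ hσpos hkey _ ih
end
end
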